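/- arXiv:1603.01029 — 5 statements merged into one kernel-verified Lean document; each statement's English description precedes it below -/
import Mathlib

section
/- Let p(x) = f(Bᵀx)·φ_Q(x) where f: ℝᵐ → (0,∞) is twice continuously differentiable, B ∈ ℝ^{d×m}, and φ_Q is the centered Gaussian with positive definite covariance Q. Define v(x) := ∇ₓ log p(x) − (∇²ₓ log p(x))·x. Then v(x) = B·(∇_u log f(u)|_{u=Bᵀx} − (∇²_u log f(u)|_{u=Bᵀx})·Bᵀx); in particular v(x) lies in the column space of B for every x, regardless of the noise covariance Q. -/
open scoped Matrix

/-- Partial derivative of `f` at `x` in the `j`-th coordinate. -/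
noncomputable def pd {d : ℕ} (j : Fin d) (f : (Fin d → ℝ) → ℝ) (x : Fin d → ℝ) : ℝ :=
  deriv (fun t => f (Function.update x j t)) (x j)

/-- Gradient of `f` at `x` as a vector of partial derivatives. -/
noncomputable def gradv {d : ℕ} (f : (Fin d → ℝ) → ℝ) (x : Fin d → ℝ) : Fin d → ℝ :=
  fun j => pd j f x

/-- Centered Gaussian density with covariance `Q`. -/
noncomputable def gaussDensity {d : ℕ} (Q : Matrix (Fin d) (Fin d) ℝ) (x : Fin d → ℝ) : ℝ :=
  (2 * Real.pi) ^ (-(d : ℝ) / 2) * Q.det ^ (-(1 : ℝ) / 2) *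
    Real.exp (-(x ⬝ᵥ Q⁻¹.mulVec x) / 2)


/-- Hessian of `f` at `x` as a matrix of second partial derivatives. -/
noncomputable def hess {d : ℕ} (f : (Fin d → ℝ) → ℝ) (x : Fin d → ℝ) :
    Matrix (Fin d) (Fin d) ℝ :=
  fun i j => pd i (fun y => pd j f y) x

lemma pd_eq {d : ℕ} (j : Fin d) (g : (Fin d → ℝ) → ℝ) (x : Fin d → ℝ)
    (hg : DifferentiableAt ℝ g x) :
    pd j g x = fderiv ℝ g x (Pi.single j 1) := by
  have hupd : HasDerivAt (fun t => Function.update x j t) (Pi.single j 1) (x j) := by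
    rw [hasDerivAt_pi]
    intro i
    by_cases h : i = j
    · subst h
      simp only [Function.update_self, Pi.single_eq_same]
      simpa using (hasDerivAt_id' (x := x i))
    · simp only [Function.update_apply, h, if_false, Pi.single_eq_of_ne h]
      exact hasDerivAt_const _ _
  have hx : Function.update x j (x j) = x := Function.update_eq_self j x
  have hg' : HasFDerivAt g (fderiv ℝ g x) (Function.update x j (x j)) := by
    rw [hx]; exact hg.hasFDerivAt
  have h2 := hg'.comp_hasDerivAt (x j) hupd
  exact h2.deriv

lemma fderiv_apply_eq {d : ℕ} (g : (Fin d → ℝ) → ℝ) (u w : Fin d → ℝ)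
    (hg : DifferentiableAt ℝ g u) :
    fderiv ℝ g u w = ∑ k, w k * pd k g u := by
  have hw : w = ∑ k, w k • (Pi.single k (1:ℝ) : Fin d → ℝ) := by
    funext i
    simp [Pi.single_apply, Finset.sum_apply]
  conv_lhs => rw [hw]
  rw [map_sum]
  refine Finset.sum_congr rfl fun k _ => ?_
  rw [map_smul, pd_eq k g u hg]
  simp [smul_eq_mul]

lemma pd_comp_clm {d m : ℕ} (j : Fin d) (g : (Fin m → ℝ) → ℝ)
    (T : (Fin d → ℝ) →L[ℝ] (Fin m → ℝ)) (x : Fin d → ℝ)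
    (hg : DifferentiableAt ℝ g (T x)) :
    pd j (fun y => g (T y)) x = ∑ k, T (Pi.single j 1) k * pd k g (T x) := by
  have hcomp : DifferentiableAt ℝ (fun y => g (T y)) x :=
    (hg.comp x T.differentiableAt)
  rw [pd_eq j _ x hcomp]
  have : fderiv ℝ (fun y => g (T y)) x = (fderiv ℝ g (T x)).comp T := by
    rw [show (fun y => g (T y)) = g ∘ T from rfl]
    rw [fderiv_comp x hg T.differentiableAt, T.fderiv]
  rw [this]
  simp only [ContinuousLinearMap.coe_comp', Function.comp_apply]
  exact fderiv_apply_eq g (T x) _ hg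

lemma contDiff_pd {m : ℕ} (g : (Fin m → ℝ) → ℝ) (hg : ContDiff ℝ 2 g) (k : Fin m) :
    ContDiff ℝ 1 (fun u => pd k g u) := by
  have hgd : Differentiable ℝ g := hg.differentiable two_ne_zero
  have : (fun u => pd k g u) = fun u => fderiv ℝ g u (Pi.single k 1) := by
    funext u; exact pd_eq k g u (hgd u)
  rw [this]
  exact (hg.fderiv_right (le_refl _)).clm_apply contDiff_const

lemma pd_add {d : ℕ} (j : Fin d) (g1 g2 : (Fin d → ℝ) → ℝ) (x : Fin d → ℝ)
    (h1 : DifferentiableAt ℝ g1 x) (h2 : DifferentiableAt ℝ g2 x) :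
    pd j (fun y => g1 y + g2 y) x = pd j g1 x + pd j g2 x := by
  rw [pd_eq j (fun y => g1 y + g2 y) x (h1.add h2), pd_eq j g1 x h1, pd_eq j g2 x h2, fderiv_fun_add h1 h2]
  simp

lemma pd_const_mul {d : ℕ} (j : Fin d) (a : ℝ) (g : (Fin d → ℝ) → ℝ) (x : Fin d → ℝ)
    (h : DifferentiableAt ℝ g x) :
    pd j (fun y => a * g y) x = a * pd j g x := by
  rw [pd_eq j _ x (h.const_mul a), pd_eq j g x h, fderiv_const_mul h a]
  simp

lemma pd_sum {d : ℕ} {ι : Type*} (s : Finset ι) (j : Fin d)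
    (g : ι → (Fin d → ℝ) → ℝ) (x : Fin d → ℝ)
    (h : ∀ k ∈ s, DifferentiableAt ℝ (g k) x) :
    pd j (fun y => ∑ k ∈ s, g k y) x = ∑ k ∈ s, pd j (g k) x := by
  rw [pd_eq j (fun y => ∑ k ∈ s, g k y) x (DifferentiableAt.fun_sum h), fderiv_fun_sum h]
  simp only [ContinuousLinearMap.coe_sum', Finset.sum_apply]
  exact Finset.sum_congr rfl fun k hk => (pd_eq j (g k) x (h k hk)).symm


lemma quad_hasFDeriv {d : ℕ} (A : Matrix (Fin d) (Fin d) ℝ) (y : Fin d → ℝ) :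
    HasFDerivAt (fun z : Fin d → ℝ => z ⬝ᵥ A.mulVec z)
      (∑ i, ((A.mulVec y i) • ContinuousLinearMap.proj i +
        y i • ((ContinuousLinearMap.proj i).comp A.mulVecLin.toContinuousLinearMap))) y := by
  have h : (fun z : Fin d → ℝ => z ⬝ᵥ A.mulVec z)
      = fun z => ∑ i, z i * A.mulVec z i := by
    funext z; rfl
  rw [h]
  apply HasFDerivAt.fun_sum
  intro i _
  have h1 : HasFDerivAt (fun z : Fin d → ℝ => z i)
      (ContinuousLinearMap.proj (R := ℝ) (φ := fun _ : Fin d => ℝ) i) y :=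
    hasFDerivAt_apply i y
  have h2 : HasFDerivAt (fun z : Fin d → ℝ => A.mulVec z i)
      ((ContinuousLinearMap.proj i).comp A.mulVecLin.toContinuousLinearMap) y := by
    have h3 := ((ContinuousLinearMap.proj (R := ℝ) (φ := fun _ : Fin d => ℝ) i).comp
      A.mulVecLin.toContinuousLinearMap).hasFDerivAt (x := y)
    exact h3
  simpa [add_comm] using h1.fun_mul h2

lemma quad_fderiv_apply {d : ℕ} (A : Matrix (Fin d) (Fin d) ℝ) (c : ℝ) (y : Fin d → ℝ) :
    HasFDerivAt (fun z : Fin d → ℝ => c - (z ⬝ᵥ A.mulVec z)/2)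
      ((-(2⁻¹:ℝ)) • (∑ i, ((A.mulVec y i) • ContinuousLinearMap.proj i +
        y i • ((ContinuousLinearMap.proj i).comp A.mulVecLin.toContinuousLinearMap)))) y := by
  have hfun : (fun z : Fin d → ℝ => c - (z ⬝ᵥ A.mulVec z)/2)
      = fun z => c + (-(2⁻¹:ℝ)) * (z ⬝ᵥ A.mulVec z) := by
    funext z; ring
  rw [hfun]
  exact ((quad_hasFDeriv A y).const_mul (-(2⁻¹:ℝ))).const_add c

lemma quad_diffAt {d : ℕ} (A : Matrix (Fin d) (Fin d) ℝ) (c : ℝ) (y : Fin d → ℝ) :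
    DifferentiableAt ℝ (fun z : Fin d → ℝ => c - (z ⬝ᵥ A.mulVec z)/2) y :=
  (quad_fderiv_apply A c y).differentiableAt

lemma quad_pd {d : ℕ} (A : Matrix (Fin d) (Fin d) ℝ) (c : ℝ) (j : Fin d) (y : Fin d → ℝ) :
    pd j (fun z => c - (z ⬝ᵥ A.mulVec z)/2) y
      = -((A.mulVec y) j + (Aᵀ.mulVec y) j)/2 := by
  have hq := quad_fderiv_apply A c y
  rw [pd_eq j _ y hq.differentiableAt, hq.fderiv]
  simp only [ContinuousLinearMap.coe_smul', Pi.smul_apply, ContinuousLinearMap.coe_sum',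
    Finset.sum_apply, ContinuousLinearMap.add_apply, ContinuousLinearMap.smul_apply,
    ContinuousLinearMap.proj_apply, ContinuousLinearMap.coe_comp', Function.comp_apply,
    LinearMap.coe_toContinuousLinearMap', Matrix.mulVecLin_apply, smul_eq_mul]
  rw [Matrix.mulVec_single]
  simp only [Pi.smul_apply, MulOpposite.smul_eq_mul_unop, MulOpposite.unop_op, Matrix.col_apply]
  have hAy : ∀ i : Fin d, (A.mulVec y) i * (Pi.single j (1:ℝ) : Fin d → ℝ) i + y i * (A i j * 1)
      = (if i = j then (A.mulVec y) j else 0) + y i * A i j := by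
    intro i
    by_cases h : i = j <;> simp [h, Pi.single_apply]
  rw [Finset.sum_congr rfl (fun i _ => hAy i)]
  rw [Finset.sum_add_distrib, Finset.sum_ite_eq' Finset.univ j]
  have : (Aᵀ.mulVec y) j = ∑ i, y i * A i j := by
    simp [Matrix.mulVec, dotProduct, Matrix.transpose_apply, mul_comm]
  simp only [Finset.mem_univ, if_true, this]
  ring

lemma quad_pd_fun {d : ℕ} (A : Matrix (Fin d) (Fin d) ℝ) (c : ℝ) (j : Fin d) :
    (fun y => pd j (fun z => c - (z ⬝ᵥ A.mulVec z)/2) y)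
      = ⇑((-(2⁻¹:ℝ)) • (((ContinuousLinearMap.proj (R := ℝ) (φ := fun _ : Fin d => ℝ) j).comp
          A.mulVecLin.toContinuousLinearMap) +
        ((ContinuousLinearMap.proj j).comp Aᵀ.mulVecLin.toContinuousLinearMap))) := by
  funext y
  rw [quad_pd]
  simp only [ContinuousLinearMap.coe_smul', Pi.smul_apply, ContinuousLinearMap.add_apply,
    ContinuousLinearMap.coe_comp', Function.comp_apply,
    LinearMap.coe_toContinuousLinearMap', Matrix.mulVecLin_apply, smul_eq_mul,
    ContinuousLinearMap.proj_apply, ContinuousLinearMap.coe_add', Pi.add_apply]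
  ring

lemma quad_pd_diff {d : ℕ} (A : Matrix (Fin d) (Fin d) ℝ) (c : ℝ) (j : Fin d) :
    Differentiable ℝ (fun y => pd j (fun z => c - (z ⬝ᵥ A.mulVec z)/2) y) := by
  rw [quad_pd_fun]
  exact ContinuousLinearMap.differentiable _

lemma quad_hess {d : ℕ} (A : Matrix (Fin d) (Fin d) ℝ) (c : ℝ) (x : Fin d → ℝ)
    (i j : Fin d) :
    hess (fun z => c - (z ⬝ᵥ A.mulVec z)/2) x i j = -(A j i + A i j)/2 := by
  show pd i (fun y => pd j (fun z => c - (z ⬝ᵥ A.mulVec z)/2) y) x = _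
  rw [quad_pd_fun]
  set G := ((-(2⁻¹:ℝ)) • (((ContinuousLinearMap.proj (R := ℝ) (φ := fun _ : Fin d => ℝ) j).comp
          A.mulVecLin.toContinuousLinearMap) +
        ((ContinuousLinearMap.proj j).comp Aᵀ.mulVecLin.toContinuousLinearMap))) with hG
  rw [pd_eq i _ x G.differentiableAt, G.fderiv]
  simp only [hG, ContinuousLinearMap.coe_smul', Pi.smul_apply, ContinuousLinearMap.add_apply,
    ContinuousLinearMap.coe_comp', Function.comp_apply,
    LinearMap.coe_toContinuousLinearMap', Matrix.mulVecLin_apply, smul_eq_mul,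
    ContinuousLinearMap.proj_apply]
  rw [Matrix.mulVec_single, Matrix.mulVec_single]
  simp only [Pi.smul_apply, MulOpposite.smul_eq_mul_unop, MulOpposite.unop_op, Matrix.col_apply,
    Matrix.transpose_apply, mul_one]
  ring

lemma quad_part {d : ℕ} (A : Matrix (Fin d) (Fin d) ℝ) (c : ℝ) (x : Fin d → ℝ) (j : Fin d) :
    pd j (fun z => c - (z ⬝ᵥ A.mulVec z)/2) x
      - ∑ i, hess (fun z => c - (z ⬝ᵥ A.mulVec z)/2) x j i * x i = 0 := by
  rw [quad_pd]
  have h1 : ∀ i, hess (fun z => c - (z ⬝ᵥ A.mulVec z)/2) x j i * x i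
      = (-(1:ℝ)/2) * (A i j * x i) + (-(1:ℝ)/2) * (A j i * x i) := by
    intro i; rw [quad_hess]; ring
  rw [Finset.sum_congr rfl fun i _ => h1 i, Finset.sum_add_distrib, ← Finset.mul_sum,
    ← Finset.mul_sum]
  have h2 : (A.mulVec x) j = ∑ i, A j i * x i := rfl
  have h3 : (Aᵀ.mulVec x) j = ∑ i, A i j * x i := by
    simp [Matrix.mulVec, dotProduct, Matrix.transpose_apply]
  rw [h2, h3]
  ring


lemma clm_apply_eq {d m : ℕ} (B : Matrix (Fin d) (Fin m) ℝ) (y : Fin d → ℝ) :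
    Bᵀ.mulVecLin.toContinuousLinearMap y = Bᵀ.mulVec y := rfl

lemma comp_eq_clm {d m : ℕ} (B : Matrix (Fin d) (Fin m) ℝ) (g : (Fin m → ℝ) → ℝ) :
    (fun y : Fin d → ℝ => g (Bᵀ.mulVec y))
      = fun y => g (Bᵀ.mulVecLin.toContinuousLinearMap y) := rfl

lemma mulVec_single_eq {d m : ℕ} (B : Matrix (Fin d) (Fin m) ℝ) (j : Fin d) (k : Fin m) :
    Bᵀ.mulVecLin.toContinuousLinearMap (Pi.single j 1) k = B j k := by
  rw [clm_apply_eq, Matrix.mulVec_single]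
  simp [Matrix.transpose_apply]

lemma grad_comp {d m : ℕ} (B : Matrix (Fin d) (Fin m) ℝ) (g : (Fin m → ℝ) → ℝ)
    (hg : Differentiable ℝ g) (x : Fin d → ℝ) (j : Fin d) :
    pd j (fun y => g (Bᵀ.mulVec y)) x = ∑ k, B j k * pd k g (Bᵀ.mulVec x) := by
  rw [comp_eq_clm, pd_comp_clm j g _ x (hg _)]
  refine Finset.sum_congr rfl fun k _ => ?_
  rw [mulVec_single_eq, clm_apply_eq]

lemma comp_diff {d m : ℕ} (B : Matrix (Fin d) (Fin m) ℝ) (g : (Fin m → ℝ) → ℝ)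
    (hg : Differentiable ℝ g) :
    Differentiable ℝ (fun y : Fin d → ℝ => g (Bᵀ.mulVec y)) :=
  hg.comp (Bᵀ.mulVecLin.toContinuousLinearMap.differentiable)

lemma pd_comp_diff {d m : ℕ} (B : Matrix (Fin d) (Fin m) ℝ) (g : (Fin m → ℝ) → ℝ)
    (hg : ContDiff ℝ 2 g) (j : Fin d) :
    Differentiable ℝ (fun y : Fin d → ℝ => pd j (fun z => g (Bᵀ.mulVec z)) y) := by
  have heq : (fun y : Fin d → ℝ => pd j (fun z => g (Bᵀ.mulVec z)) y)
      = fun y => ∑ k, B j k * pd k g (Bᵀ.mulVec y) := by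
    funext y
    exact grad_comp B g (hg.differentiable two_ne_zero) y j
  rw [heq]
  apply Differentiable.fun_sum
  intro k _
  have hk : Differentiable ℝ (fun y : Fin d → ℝ => pd k g (Bᵀ.mulVec y)) :=
    ((contDiff_pd g hg k).differentiable one_ne_zero).comp
      (Bᵀ.mulVecLin.toContinuousLinearMap.differentiable)
  exact hk.const_mul (B j k)

lemma hess_comp {d m : ℕ} (B : Matrix (Fin d) (Fin m) ℝ) (g : (Fin m → ℝ) → ℝ)
    (hg : ContDiff ℝ 2 g) (x : Fin d → ℝ) (i j : Fin d) :
    hess (fun y => g (Bᵀ.mulVec y)) x i j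
      = ∑ k, B j k * ∑ l, B i l * pd l (fun u => pd k g u) (Bᵀ.mulVec x) := by
  show pd i (fun y => pd j (fun z => g (Bᵀ.mulVec z)) y) x = _
  have heq : (fun y : Fin d → ℝ => pd j (fun z => g (Bᵀ.mulVec z)) y)
      = fun y => ∑ k, B j k * pd k g (Bᵀ.mulVec y) := by
    funext y
    exact grad_comp B g (hg.differentiable two_ne_zero) y j
  rw [heq]
  have hdk : ∀ k : Fin m, Differentiable ℝ (fun y : Fin d → ℝ => pd k g (Bᵀ.mulVec y)) :=
    fun k => ((contDiff_pd g hg k).differentiable one_ne_zero).comp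
      (Bᵀ.mulVecLin.toContinuousLinearMap.differentiable)
  rw [pd_sum Finset.univ i _ x (fun k _ => ((hdk k) x).const_mul (B j k))]
  refine Finset.sum_congr rfl fun k _ => ?_
  rw [pd_const_mul i (B j k) _ x ((hdk k) x)]
  congr 1
  exact grad_comp B (fun u => pd k g u) ((contDiff_pd g hg k).differentiable one_ne_zero) x i

lemma comp_part {d m : ℕ} (B : Matrix (Fin d) (Fin m) ℝ) (g : (Fin m → ℝ) → ℝ)
    (hg : ContDiff ℝ 2 g) (x : Fin d → ℝ) (j : Fin d) :
    pd j (fun y => g (Bᵀ.mulVec y)) x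
      - ∑ i, hess (fun y => g (Bᵀ.mulVec y)) x j i * x i
    = B.mulVec (gradv g (Bᵀ.mulVec x) - (hess g (Bᵀ.mulVec x)).mulVec (Bᵀ.mulVec x)) j := by
  have hgd : Differentiable ℝ g := hg.differentiable two_ne_zero
  rw [grad_comp B g hgd x j]
  have hH : ∀ i, hess (fun y => g (Bᵀ.mulVec y)) x j i
      = ∑ k, B i k * ∑ l, B j l * pd l (fun u => pd k g u) (Bᵀ.mulVec x) :=
    fun i => hess_comp B g hg x j i
  have hs : ∑ i, hess (fun y => g (Bᵀ.mulVec y)) x j i * x i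
      = ∑ i, (∑ k, B i k * ∑ l, B j l * pd l (fun u => pd k g u) (Bᵀ.mulVec x)) * x i :=
    Finset.sum_congr rfl fun i _ => by rw [hH i]
  rw [hs]
  have hRHS : B.mulVec (gradv g (Bᵀ.mulVec x)
      - (hess g (Bᵀ.mulVec x)).mulVec (Bᵀ.mulVec x)) j
      = ∑ l, B j l * pd l g (Bᵀ.mulVec x)
        - ∑ l, B j l * ∑ k, pd l (fun u => pd k g u) (Bᵀ.mulVec x) * (Bᵀ.mulVec x) k := by
    show ∑ l, B j l * ((gradv g (Bᵀ.mulVec x)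
      - (hess g (Bᵀ.mulVec x)).mulVec (Bᵀ.mulVec x)) l) = _
    simp only [Pi.sub_apply, mul_sub, Finset.sum_sub_distrib]
    rfl
  rw [hRHS]
  congr 1
  have hul : ∀ k, (Bᵀ.mulVec x) k = ∑ i, B i k * x i := by
    intro k; simp [Matrix.mulVec, dotProduct, Matrix.transpose_apply]
  calc ∑ i, (∑ k, B i k * ∑ l, B j l * pd l (fun u => pd k g u) (Bᵀ.mulVec x)) * x i
      = ∑ i, ∑ k, ∑ l, B j l * (pd l (fun u => pd k g u) (Bᵀ.mulVec x) * (B i k * x i)) := by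
        refine Finset.sum_congr rfl fun i _ => ?_
        rw [Finset.sum_mul]
        refine Finset.sum_congr rfl fun k _ => ?_
        rw [Finset.mul_sum, Finset.sum_mul]
        exact Finset.sum_congr rfl fun l _ => by ring
    _ = ∑ k, ∑ l, ∑ i, B j l * (pd l (fun u => pd k g u) (Bᵀ.mulVec x) * (B i k * x i)) := by
        rw [Finset.sum_comm]
        exact Finset.sum_congr rfl fun k _ => Finset.sum_comm
    _ = ∑ l, ∑ k, ∑ i, B j l * (pd l (fun u => pd k g u) (Bᵀ.mulVec x) * (B i k * x i)) :=
        Finset.sum_comm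
    _ = ∑ l, B j l * ∑ k, pd l (fun u => pd k g u) (Bᵀ.mulVec x) * (Bᵀ.mulVec x) k := by
        refine Finset.sum_congr rfl fun l _ => ?_
        rw [Finset.mul_sum]
        refine Finset.sum_congr rfl fun k _ => ?_
        rw [hul k, Finset.mul_sum, Finset.mul_sum]

lemma main_calc {d m : ℕ} (B : Matrix (Fin d) (Fin m) ℝ) (g : (Fin m → ℝ) → ℝ)
    (hg : ContDiff ℝ 2 g) (A : Matrix (Fin d) (Fin d) ℝ) (c : ℝ) (x : Fin d → ℝ) :
    gradv (fun y => g (Bᵀ.mulVec y) + (c - (y ⬝ᵥ A.mulVec y)/2)) x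
      - (hess (fun y => g (Bᵀ.mulVec y) + (c - (y ⬝ᵥ A.mulVec y)/2)) x).mulVec x
    = B.mulVec (gradv g (Bᵀ.mulVec x) - (hess g (Bᵀ.mulVec x)).mulVec (Bᵀ.mulVec x)) := by
  funext j
  have hgd : Differentiable ℝ g := hg.differentiable two_ne_zero
  have hFd : Differentiable ℝ (fun y : Fin d → ℝ => g (Bᵀ.mulVec y)) := comp_diff B g hgd
  have hsum : ∀ (i : Fin d) (y : Fin d → ℝ),
      pd i (fun z => g (Bᵀ.mulVec z) + (c - (z ⬝ᵥ A.mulVec z)/2)) y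
      = pd i (fun z => g (Bᵀ.mulVec z)) y + pd i (fun z => c - (z ⬝ᵥ A.mulVec z)/2) y :=
    fun i y => pd_add i _ _ y (hFd y) (quad_diffAt A c y)
  have hhess : ∀ i, hess (fun y => g (Bᵀ.mulVec y) + (c - (y ⬝ᵥ A.mulVec y)/2)) x j i
      = hess (fun y => g (Bᵀ.mulVec y)) x j i
        + hess (fun z => c - (z ⬝ᵥ A.mulVec z)/2) x j i := by
    intro i
    show pd j _ x = _
    have heq : (fun y => pd i (fun z => g (Bᵀ.mulVec z) + (c - (z ⬝ᵥ A.mulVec z)/2)) y)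
        = fun y => pd i (fun z => g (Bᵀ.mulVec z)) y
            + pd i (fun z => c - (z ⬝ᵥ A.mulVec z)/2) y := funext (hsum i)
    rw [heq]
    exact pd_add j _ _ x ((pd_comp_diff B g hg i) x) ((quad_pd_diff A c i) x)
  have hL : (gradv (fun y => g (Bᵀ.mulVec y) + (c - (y ⬝ᵥ A.mulVec y)/2)) x
      - (hess (fun y => g (Bᵀ.mulVec y) + (c - (y ⬝ᵥ A.mulVec y)/2)) x).mulVec x) j
      = (pd j (fun z => g (Bᵀ.mulVec z)) x
          - ∑ i, hess (fun y => g (Bᵀ.mulVec y)) x j i * x i)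
        + (pd j (fun z => c - (z ⬝ᵥ A.mulVec z)/2) x
          - ∑ i, hess (fun z => c - (z ⬝ᵥ A.mulVec z)/2) x j i * x i) := by
    show gradv _ x j - ∑ i, hess _ x j i * x i = _
    rw [show gradv (fun y => g (Bᵀ.mulVec y) + (c - (y ⬝ᵥ A.mulVec y)/2)) x j
      = pd j (fun z => g (Bᵀ.mulVec z)) x + pd j (fun z => c - (z ⬝ᵥ A.mulVec z)/2) x
      from hsum j x]
    rw [Finset.sum_congr rfl fun i _ => by rw [hhess i, add_mul]]
    rw [Finset.sum_add_distrib]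
    ring
  rw [hL, comp_part B g hg x j, quad_part A c x j, add_zero]


theorem stmt2 {d m : ℕ} (Q : Matrix (Fin d) (Fin d) ℝ) (hQ : Q.PosDef)
    (B : Matrix (Fin d) (Fin m) ℝ)
    (f : (Fin m → ℝ) → ℝ) (hf : ContDiff ℝ 2 f) (hfpos : ∀ u, 0 < f u)
    (p : (Fin d → ℝ) → ℝ)
    (hp : ∀ x, p x = f (Bᵀ.mulVec x) * gaussDensity Q x)
    (v : (Fin d → ℝ) → (Fin d → ℝ))
    (hv : ∀ x, v x = gradv (fun y => Real.log (p y)) x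
        - (hess (fun y => Real.log (p y)) x).mulVec x) :
    ∀ x : Fin d → ℝ,
      v x = B.mulVec (gradv (fun u => Real.log (f u)) (Bᵀ.mulVec x)
              - (hess (fun u => Real.log (f u)) (Bᵀ.mulVec x)).mulVec (Bᵀ.mulVec x)) ∧
      v x ∈ Set.range B.mulVec := by
  intro x
  have hg₁ : ContDiff ℝ 2 (fun u => Real.log (f u)) :=
    contDiff_iff_contDiffAt.mpr fun u => (hf.contDiffAt).log (hfpos u).ne'
  have hdet : (0:ℝ) < Q.det := hQ.det_pos
  have h1 : (0:ℝ) < (2*Real.pi) ^ (-(d:ℝ)/2) :=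
    Real.rpow_pos_of_pos (by positivity) _
  have h2 : (0:ℝ) < Q.det ^ (-(1:ℝ)/2) := Real.rpow_pos_of_pos hdet _
  have hlog : (fun y => Real.log (p y))
      = fun y => Real.log (f (Bᵀ.mulVec y))
          + (Real.log ((2 * Real.pi) ^ (-(d:ℝ)/2)) + Real.log (Q.det ^ (-(1:ℝ)/2))
             - (y ⬝ᵥ Q⁻¹.mulVec y)/2) := by
    funext y
    rw [hp, gaussDensity]
    rw [Real.log_mul (hfpos _).ne' (by positivity),
        Real.log_mul (by positivity) (Real.exp_pos _).ne',
        Real.log_mul h1.ne' h2.ne', Real.log_exp]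
    ring
  have key : v x = B.mulVec (gradv (fun u => Real.log (f u)) (Bᵀ.mulVec x)
      - (hess (fun u => Real.log (f u)) (Bᵀ.mulVec x)).mulVec (Bᵀ.mulVec x)) := by
    rw [hv x, hlog]
    exact main_calc B (fun u => Real.log (f u)) hg₁ Q⁻¹
      (Real.log ((2 * Real.pi) ^ (-(d:ℝ)/2)) + Real.log (Q.det ^ (-(1:ℝ)/2))) x
  exact ⟨key, key ▸ ⟨_, rfl⟩⟩
end

section
/- Let p be a C¹ density on ℝᵈ satisfying the boundary condition lim_{|y_j|→∞} g(y)p(y) = 0 for a C¹ model g. Then the squared-error risk J(g) := E[(g(y) − ∂_j log p(y))²] − E[(∂_j log p(y))²] equals E[g(y)² + 2·∂_j g(y)]. In particular the risk J can be expressed without any reference to the unknown quantity ∂_j log p except through expectations of g and its derivative. -/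
open MeasureTheory Filter

lemma hasDerivAt_slice {d : ℕ} (j : Fin d) (f : (Fin d → ℝ) → ℝ) (hf : ContDiff ℝ 1 f)
    (x : Fin d → ℝ) (t : ℝ) :
    HasDerivAt (fun s => f (Function.update x j s)) (pd j f (Function.update x j t)) t := by
  have hA : (fun s : ℝ => Function.update x j s)
      = fun s => Function.update x j 0 + s • Pi.single j 1 := by
    funext s i
    by_cases h : i = j
    · subst h; simp
    · simp [Function.update_of_ne h, Pi.single_eq_of_ne h]
  have hA' : Differentiable ℝ (fun s : ℝ => Function.update x j s) := by
    rw [hA]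
    exact (differentiable_id.smul_const _).const_add _
  have hdiff : Differentiable ℝ (fun s : ℝ => f (Function.update x j s)) :=
    (hf.differentiable one_ne_zero).comp hA'
  have h := (hdiff t).hasDerivAt
  convert h using 1
  · rfl
  · rfl
  simp [pd, Function.update_idem]

noncomputable def sl {d : ℕ} (j : Fin d) (z : {i : Fin d // ¬ i = j} → ℝ) : Fin d → ℝ :=
  fun i => if h : i = j then 0 else z ⟨i, h⟩

noncomputable def Phi {d : ℕ} (j : Fin d) :
    (ℝ × ({i : Fin d // ¬ i = j} → ℝ)) ≃ᵐ (Fin d → ℝ) :=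
  ((MeasurableEquiv.funUnique {i : Fin d // i = j} ℝ).symm.prodCongr
    (MeasurableEquiv.refl _)).trans
    (MeasurableEquiv.piEquivPiSubtypeProd (fun _ : Fin d => ℝ) (fun i => i = j)).symm

lemma Phi_apply {d : ℕ} (j : Fin d) (t : ℝ) (z : {i : Fin d // ¬ i = j} → ℝ) :
    Phi j (t, z) = Function.update (sl j z) j t := by
  funext i
  by_cases h : i = j
  · subst h
    simp [Phi, MeasurableEquiv.piEquivPiSubtypeProd, Equiv.piEquivPiSubtypeProd,
      MeasurableEquiv.funUnique, Equiv.funUnique, Function.update_self,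
      MeasurableEquiv.prodCongr, Equiv.prodCongr, MeasurableEquiv.refl,
      MeasurableEquiv.piUnique, Equiv.piUnique]
  · simp [Phi, MeasurableEquiv.piEquivPiSubtypeProd, Equiv.piEquivPiSubtypeProd,
      Function.update_of_ne h, sl, h, MeasurableEquiv.prodCongr, Equiv.prodCongr,
      MeasurableEquiv.refl, MeasurableEquiv.funUnique, Equiv.funUnique,
      MeasurableEquiv.piUnique, Equiv.piUnique]

lemma Phi_mp {d : ℕ} (j : Fin d) :
    MeasurePreserving (Phi j) ((volume : Measure ℝ).prod volume) volume := by
  have mp1 : MeasurePreserving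
      ((MeasurableEquiv.funUnique {i : Fin d // i = j} ℝ).symm.prodCongr
        (MeasurableEquiv.refl ({i : Fin d // ¬ i = j} → ℝ)))
      ((volume : Measure ℝ).prod volume)
      ((volume : Measure ({i : Fin d // i = j} → ℝ)).prod volume) := by
    exact ((volume_preserving_funUnique {i : Fin d // i = j} ℝ).symm _).prod
      (MeasurePreserving.id _)
  have mp2 : MeasurePreserving
      ((MeasurableEquiv.piEquivPiSubtypeProd (fun _ : Fin d => ℝ) (fun i => i = j)).symm)
      ((volume : Measure ({i : Fin d // i = j} → ℝ)).prod volume)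
      (volume : Measure (Fin d → ℝ)) := by
    have h := (volume_preserving_piEquivPiSubtypeProd (fun _ : Fin d => ℝ)
      (fun i => i = j)).symm (MeasurableEquiv.piEquivPiSubtypeProd (fun _ : Fin d => ℝ) (fun i => i = j))
    rw [MeasureTheory.Measure.volume_eq_prod] at h
    have : (Fintype.subtypeEq j) = (Subtype.fintype fun i => i = j) := Subsingleton.elim _ _
    convert h
    rfl
  exact mp2.comp mp1

lemma fubini_slice {d : ℕ} (j : Fin d) (f : (Fin d → ℝ) → ℝ) (hf : Integrable f) :
    ∫ y, f y = ∫ z : {i : Fin d // ¬ i = j} → ℝ, ∫ t : ℝ, f (Function.update (sl j z) j t) := by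
  have h1 : ∫ y, f y = ∫ q : ℝ × ({i : Fin d // ¬ i = j} → ℝ),
      f (Phi j q) ∂((volume : Measure ℝ).prod volume) :=
    ((Phi_mp j).integral_comp (Phi j).measurableEmbedding f).symm
  have hint : Integrable (fun q : ℝ × ({i : Fin d // ¬ i = j} → ℝ) => f (Phi j q))
      ((volume : Measure ℝ).prod volume) :=
    ((Phi_mp j).integrable_comp_emb (Phi j).measurableEmbedding).mpr hf
  rw [h1, integral_prod_symm _ hint]
  simp_rw [Phi_apply]

lemma slice_int {d : ℕ} (j : Fin d) (f : (Fin d → ℝ) → ℝ) (hf : Integrable f) :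
    ∀ᵐ z : {i : Fin d // ¬ i = j} → ℝ,
      Integrable (fun t : ℝ => f (Function.update (sl j z) j t)) := by
  have hint : Integrable (fun q : ℝ × ({i : Fin d // ¬ i = j} → ℝ) => f (Phi j q))
      ((volume : Measure ℝ).prod volume) :=
    ((Phi_mp j).integrable_comp_emb (Phi j).measurableEmbedding).mpr hf
  filter_upwards [hint.prod_left_ae] with z hz
  simpa [Phi_apply] using hz

lemma key {d : ℕ} (j : Fin d) (p g : (Fin d → ℝ) → ℝ)
    (hp : ContDiff ℝ 1 p) (hg : ContDiff ℝ 1 g)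
    (hbound : ∀ x : Fin d → ℝ,
      Tendsto (fun t => g (Function.update x j t) * p (Function.update x j t))
        (cocompact ℝ) (nhds 0))
    (hi1 : Integrable (fun y => g y * pd j p y))
    (hi2 : Integrable (fun y => pd j g y * p y)) :
    ∫ y, g y * pd j p y = - ∫ y, pd j g y * p y := by
  rw [fubini_slice j _ hi1, fubini_slice j _ hi2, ← integral_neg]
  apply integral_congr_ae
  filter_upwards [slice_int j _ hi1, slice_int j _ hi2] with z h1 h2
  set x := sl j z with hx
  have hu : ∀ t : ℝ, HasDerivAt (fun s => g (Function.update x j s))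
      (pd j g (Function.update x j t)) t := fun t => hasDerivAt_slice j g hg x t
  have hv : ∀ t : ℝ, HasDerivAt (fun s => p (Function.update x j s))
      (pd j p (Function.update x j t)) t := fun t => hasDerivAt_slice j p hp x t
  have hb := hbound x
  rw [cocompact_eq_atBot_atTop, tendsto_sup] at hb
  have := integral_mul_deriv_eq_deriv_mul (u := fun s => g (Function.update x j s))
    (v := fun s => p (Function.update x j s))
    (u' := fun t => pd j g (Function.update x j t))
    (v' := fun t => pd j p (Function.update x j t))
    (fun t _ => hu t) (fun t _ => hv t) h1 h2 hb.1 hb.2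
  simpa using this

lemma pd_log {d : ℕ} (j : Fin d) (p : (Fin d → ℝ) → ℝ) (hp : ContDiff ℝ 1 p)
    (hppos : ∀ x, 0 < p x) (y : Fin d → ℝ) :
    pd j (fun z => Real.log (p z)) y * p y = pd j p y := by
  have hv := hasDerivAt_slice j p hp y (y j)
  rw [Function.update_eq_self] at hv
  have hlog := hv.log (ne_of_gt (hppos _))
  have : pd j (fun z => Real.log (p z)) y = pd j p y / p y := by
    simpa [pd] using hlog.deriv
  rw [this]
  exact div_mul_cancel₀ _ (ne_of_gt (hppos y))

theorem stmt5 {d : ℕ} (j : Fin d) (p g : (Fin d → ℝ) → ℝ)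
    (hp : ContDiff ℝ 1 p) (hppos : ∀ x, 0 < p x) (hpdens : ∫ x, p x = 1)
    (hg : ContDiff ℝ 1 g)
    (hbound : ∀ x : Fin d → ℝ,
      Tendsto (fun t => g (Function.update x j t) * p (Function.update x j t))
        (cocompact ℝ) (nhds 0))
    (hint1 : Integrable (fun y => (g y) ^ 2 * p y))
    (hint2 : Integrable (fun y => pd j g y * p y))
    (hint3 : Integrable (fun y => (pd j (fun z => Real.log (p z)) y) ^ 2 * p y))
    (hint4 : Integrable (fun y => g y * pd j (fun z => Real.log (p z)) y * p y)) :
    (∫ y, (g y - pd j (fun z => Real.log (p z)) y) ^ 2 * p y)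
      - (∫ y, (pd j (fun z => Real.log (p z)) y) ^ 2 * p y)
      = ∫ y, (g y ^ 2 + 2 * pd j g y) * p y := by
  set s := fun y => pd j (fun z => Real.log (p z)) y with hs
  have hsp : ∀ y, s y * p y = pd j p y := fun y => pd_log j p hp hppos y
  have hi1 : Integrable (fun y => g y * pd j p y) := by
    apply hint4.congr
    filter_upwards with y
    rw [mul_assoc, hsp y]
  have hC : ∫ y, g y * s y * p y = - ∫ y, pd j g y * p y := by
    rw [show (fun y => g y * s y * p y) = fun y => g y * pd j p y from
      funext fun y => by rw [mul_assoc, hsp y]]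
    exact key j p g hp hg hbound hi1 hint2
  have e1 : ∀ y, (g y - s y) ^ 2 * p y
      = ((g y) ^ 2 * p y + (s y) ^ 2 * p y) - 2 * (g y * s y * p y) := fun y => by ring
  have e2 : ∀ y, (g y ^ 2 + 2 * pd j g y) * p y
      = (g y) ^ 2 * p y + 2 * (pd j g y * p y) := fun y => by ring
  rw [show (fun y => (g y - s y) ^ 2 * p y) = fun y =>
      ((g y) ^ 2 * p y + (s y) ^ 2 * p y) - 2 * (g y * s y * p y) from funext e1]
  rw [show (fun y => (g y ^ 2 + 2 * pd j g y) * p y) = fun y =>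
      (g y) ^ 2 * p y + 2 * (pd j g y * p y) from funext e2]
  have hadd : Integrable (fun y => (g y) ^ 2 * p y + (s y) ^ 2 * p y) := hint1.add hint3
  rw [integral_sub hadd (hint4.const_mul 2), integral_add hint1 hint3,
    integral_add hint1 (hint2.const_mul 2), integral_const_mul, integral_const_mul, hC]
  ring
end

section
/- Let R*(α) = αᵀ(S* + γ*I)α + 2αᵀt* with S* + γ*I positive definite with smallest eigenvalue ε > 0, minimized at α*. Let R̂(α) = αᵀ(S* + u_S + (γ* + u_γ)I)α + 2αᵀ(t* + u_t) be a perturbed objective with a minimizer α̂ lying in a ball of radius δ around α*. Then ‖α̂ − α*‖ ≤ (2(δ + ‖α*‖)(‖u_S‖_op + |u_γ|) + 2‖u_t‖)/ε. -/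
open scoped Matrix RealInnerProductSpace

theorem stmt9 {b : ℕ} (Ss uS : Matrix (Fin b) (Fin b) ℝ)
    (hSs : Ss.IsSymm) (huS : uS.IsSymm)
    (ts ut : EuclideanSpace ℝ (Fin b)) (γs uγ : ℝ) (ε δ : ℝ) (hε : 0 < ε)
    (heig : ∀ v : EuclideanSpace ℝ (Fin b),
      ε * ‖v‖ ^ 2 ≤ ⟪v, Matrix.toEuclideanCLM (𝕜 := ℝ) Ss v⟫ + γs * ‖v‖ ^ 2)
    (Rs Rhat : EuclideanSpace ℝ (Fin b) → ℝ)
    (hRs : ∀ α, Rs α = ⟪α, Matrix.toEuclideanCLM (𝕜 := ℝ) Ss α⟫ + 2 * ⟪α, ts⟫ + γs * ‖α‖ ^ 2)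
    (hRhat : ∀ α, Rhat α = ⟪α, Matrix.toEuclideanCLM (𝕜 := ℝ) (Ss + uS) α⟫
        + 2 * ⟪α, ts + ut⟫ + (γs + uγ) * ‖α‖ ^ 2)
    (αs αh : EuclideanSpace ℝ (Fin b))
    (hαs : ∀ α, Rs αs ≤ Rs α) (hαh : ∀ α, Rhat αh ≤ Rhat α)
    (hδ : ‖αh - αs‖ ≤ δ) :
    ‖αh - αs‖ ≤ (2 * (δ + ‖αs‖) * (‖Matrix.toEuclideanCLM (𝕜 := ℝ) uS‖ + |uγ|)
        + 2 * ‖ut‖) / ε := by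
  set A := Matrix.toEuclideanCLM (𝕜 := ℝ) Ss with hAdef
  set B := Matrix.toEuclideanCLM (𝕜 := ℝ) uS with hBdef
  have hδ0 : 0 ≤ δ := le_trans (norm_nonneg _) hδ
  by_cases hd0 : αh = αs
  · rw [hd0]; simp only [sub_self, norm_zero]
    positivity
  -- symmetry of A and B
  have symA : ∀ x y : EuclideanSpace ℝ (Fin b), ⟪A x, y⟫ = ⟪x, A y⟫ := by
    intro x y
    have h := (Matrix.isHermitian_iff_isSymmetric.mp (hSs : Ss.IsHermitian)) x y
    simpa [← Matrix.coe_toEuclideanCLM_eq_toEuclideanLin] using h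
  have symB : ∀ x y : EuclideanSpace ℝ (Fin b), ⟪B x, y⟫ = ⟪x, B y⟫ := by
    intro x y
    have h := (Matrix.isHermitian_iff_isSymmetric.mp (huS : uS.IsHermitian)) x y
    simpa [← Matrix.coe_toEuclideanCLM_eq_toEuclideanLin] using h
  set d := αh - αs with hddef
  have hαh' : αh = αs + d := by rw [hddef]; abel
  have hdpos : 0 < ‖d‖ := by
    rw [norm_pos_iff]
    intro h
    exact hd0 (by rw [hddef] at h; exact sub_eq_zero.mp h)
  set Q : ℝ := ⟪d, A d⟫ + γs * ‖d‖ ^ 2 with hQdef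
  set L : ℝ := 2 * ⟪d, A αs⟫ + 2 * ⟪d, ts⟫ + 2 * (γs * ⟪d, αs⟫) with hLdef
  have hsymAd : ⟪αs, A d⟫ = ⟪d, A αs⟫ := by
    rw [← symA]; exact real_inner_comm _ _
  have hexp : ∀ t : ℝ, Rs (αs + t • d) = Rs αs + t * L + t ^ 2 * Q := by
    intro t
    rw [hRs, hRs, hQdef, hLdef]
    simp only [← real_inner_self_eq_norm_sq, map_add, map_smul, inner_add_left,
      inner_add_right, real_inner_smul_left, real_inner_smul_right, smul_smul]
    rw [hsymAd, real_inner_comm d αs]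
    ring
  have hQ : ε * ‖d‖ ^ 2 ≤ Q := heig d
  have hQpos : 0 < Q := lt_of_lt_of_le (by positivity) hQ
  have hmin : ∀ t : ℝ, 0 ≤ t * L + t ^ 2 * Q := by
    intro t
    have h := hαs (αs + t • d)
    rw [hexp t] at h
    linarith
  have hL : L = 0 := by
    have h1 := hmin (-(L / (2 * Q)))
    have h2 : -(L / (2 * Q)) * L + (-(L / (2 * Q))) ^ 2 * Q = -(L ^ 2) / (4 * Q) := by
      field_simp
      ring
    rw [h2] at h1
    have h3 : 0 ≤ -(L ^ 2) := by
      rcases div_nonneg_iff.mp h1 with ⟨h, _⟩ | ⟨_, h⟩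
      · exact h
      · linarith
    have h4 : L ^ 2 = 0 := le_antisymm (by linarith) (sq_nonneg L)
    exact pow_eq_zero_iff (by norm_num) |>.mp h4
  have hgrow : Rs αs + ε * ‖d‖ ^ 2 ≤ Rs αh := by
    have h := hexp 1
    rw [one_smul, ← hαh'] at h
    rw [h, hL]
    linarith [hQ]
  have hdiff : ∀ x : EuclideanSpace ℝ (Fin b),
      Rhat x - Rs x = ⟪x, B x⟫ + 2 * ⟪x, ut⟫ + uγ * ‖x‖ ^ 2 := by
    intro x
    rw [hRhat, hRs]
    rw [map_add (Matrix.toEuclideanCLM (𝕜 := ℝ))]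
    simp only [ContinuousLinearMap.add_apply, inner_add_right, ← hAdef, ← hBdef]
    ring
  set s : EuclideanSpace ℝ (Fin b) := αh + αs with hsdef
  have hBs : ⟪αh, B αh⟫ - ⟪αs, B αs⟫ = ⟪d, B s⟫ := by
    rw [hddef, hsdef]
    simp only [map_add, map_sub, inner_add_left, inner_add_right, inner_sub_left,
      inner_sub_right]
    have : ⟪αs, B αh⟫ = ⟪αh, B αs⟫ := by rw [← symB]; exact real_inner_comm _ _
    linarith
  have hns : ‖αh‖ ^ 2 - ‖αs‖ ^ 2 = ⟪d, s⟫ := by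
    rw [hddef, hsdef]
    simp only [← real_inner_self_eq_norm_sq, inner_sub_left, inner_add_right]
    have : ⟪αs, αh⟫ = ⟪αh, αs⟫ := real_inner_comm _ _
    linarith
  have key : ε * ‖d‖ ^ 2 ≤ -⟪d, B s⟫ - 2 * ⟪d, ut⟫ - uγ * ⟪d, s⟫ := by
    have h1 : Rhat αh ≤ Rhat αs := hαh αs
    have h2 := hdiff αh
    have h3 := hdiff αs
    have h4 : ⟪αh, ut⟫ - ⟪αs, ut⟫ = ⟪d, ut⟫ := by
      rw [hddef, inner_sub_left]
    have h6 : uγ * ‖αh‖ ^ 2 - uγ * ‖αs‖ ^ 2 = uγ * ⟪d, s⟫ := by rw [← hns]; ring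
    linarith [hBs, hns, hgrow]
  -- norm bounds
  have hsb : ‖s‖ ≤ δ + 2 * ‖αs‖ := by
    have : s = d + (αs + αs) := by rw [hsdef, hddef]; abel
    calc ‖s‖ = ‖d + (αs + αs)‖ := by rw [this]
    _ ≤ ‖d‖ + ‖αs + αs‖ := norm_add_le _ _
    _ ≤ ‖d‖ + (‖αs‖ + ‖αs‖) := by linarith [norm_add_le αs αs]
    _ ≤ δ + 2 * ‖αs‖ := by rw [hddef]; linarith
  have b1 : -⟪d, B s⟫ ≤ ‖d‖ * (‖B‖ * ‖s‖) := by
    have h2 : ‖B s‖ ≤ ‖B‖ * ‖s‖ := B.le_opNorm s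
    calc -⟪d, B s⟫ ≤ |⟪d, B s⟫| := neg_le_abs _
    _ ≤ ‖d‖ * ‖B s‖ := abs_real_inner_le_norm d (B s)
    _ ≤ ‖d‖ * (‖B‖ * ‖s‖) := mul_le_mul_of_nonneg_left h2 (norm_nonneg d)
  have b2 : -(2 * ⟪d, ut⟫) ≤ ‖d‖ * (2 * ‖ut‖) := by
    calc -(2 * ⟪d, ut⟫) ≤ 2 * |⟪d, ut⟫| := by linarith [neg_abs_le (⟪d, ut⟫ : ℝ)]
    _ ≤ 2 * (‖d‖ * ‖ut‖) := by linarith [abs_real_inner_le_norm d ut]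
    _ = ‖d‖ * (2 * ‖ut‖) := by ring
  have b3 : -(uγ * ⟪d, s⟫) ≤ ‖d‖ * (|uγ| * ‖s‖) := by
    have h := abs_real_inner_le_norm d s
    calc -(uγ * ⟪d, s⟫) ≤ |uγ * ⟪d, s⟫| := neg_le_abs _
    _ = |uγ| * |⟪d, s⟫| := abs_mul _ _
    _ ≤ |uγ| * (‖d‖ * ‖s‖) := by
        apply mul_le_mul_of_nonneg_left h (abs_nonneg _)
    _ = ‖d‖ * (|uγ| * ‖s‖) := by ring
  set N : ℝ := 2 * (δ + ‖αs‖) * (‖B‖ + |uγ|) + 2 * ‖ut‖ with hNdef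
  have hfinal : ε * ‖d‖ ^ 2 ≤ ‖d‖ * N := by
    have h7 : -⟪d, B s⟫ - 2 * ⟪d, ut⟫ - uγ * ⟪d, s⟫
        ≤ ‖d‖ * (‖B‖ * ‖s‖) + ‖d‖ * (2 * ‖ut‖) + ‖d‖ * (|uγ| * ‖s‖) := by
      linarith [b1, b2, b3]
    have h8 : ‖d‖ * (‖B‖ * ‖s‖) + ‖d‖ * (2 * ‖ut‖) + ‖d‖ * (|uγ| * ‖s‖)
        = ‖d‖ * ((‖B‖ + |uγ|) * ‖s‖ + 2 * ‖ut‖) := by ring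
    have h9 : ‖d‖ * ((‖B‖ + |uγ|) * ‖s‖ + 2 * ‖ut‖)
        ≤ ‖d‖ * ((‖B‖ + |uγ|) * (δ + 2 * ‖αs‖) + 2 * ‖ut‖) := by
      apply mul_le_mul_of_nonneg_left _ (norm_nonneg d)
      have := mul_le_mul_of_nonneg_left hsb (by positivity : (0:ℝ) ≤ ‖B‖ + |uγ|)
      linarith
    have h10 : (‖B‖ + |uγ|) * (δ + 2 * ‖αs‖) + 2 * ‖ut‖ ≤ N := by
      rw [hNdef]
      have hle : (δ + 2 * ‖αs‖) ≤ 2 * (δ + ‖αs‖) := by linarith [norm_nonneg αs]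
      have : (‖B‖ + |uγ|) * (δ + 2 * ‖αs‖) ≤ 2 * (δ + ‖αs‖) * (‖B‖ + |uγ|) := by
        calc (‖B‖ + |uγ|) * (δ + 2 * ‖αs‖)
            ≤ (‖B‖ + |uγ|) * (2 * (δ + ‖αs‖)) :=
              mul_le_mul_of_nonneg_left hle (by positivity)
        _ = 2 * (δ + ‖αs‖) * (‖B‖ + |uγ|) := by ring
      linarith
    have h11 : ‖d‖ * ((‖B‖ + |uγ|) * (δ + 2 * ‖αs‖) + 2 * ‖ut‖) ≤ ‖d‖ * N :=
      mul_le_mul_of_nonneg_left h10 (norm_nonneg d)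
    linarith [key]
  rw [le_div_iff₀ hε]
  have h12 : ‖d‖ * (ε * ‖d‖) ≤ ‖d‖ * N := by
    calc ‖d‖ * (ε * ‖d‖) = ε * ‖d‖ ^ 2 := by ring
    _ ≤ ‖d‖ * N := hfinal
  have h13 : ε * ‖d‖ ≤ N := (mul_le_mul_iff_right₀ hdpos).mp h12
  linarith [h13]
end

section
/- For a twice continuously differentiable positive density p on ℝᵈ with suitable decay, and a C¹ model w: ℝᵈ → ℝ with lim_{|x_j|→∞} w(x)p(x) = 0, the risk R(w) := E[(w(x) − v_j(x))²] − E[v_j(x)²], where v_j(x) = ∂_j log p(x) − (∇ ∂_j log p(x))ᵀx, equals E[w(x)² + 2∂_j w(x) + 2w(x)·(∇∂_j log p(x))ᵀx]. -/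
open MeasureTheory Filter

lemma pd_update {d : ℕ} (j : Fin d) (f : (Fin d → ℝ) → ℝ) (x : Fin d → ℝ) (t : ℝ) :
    pd j f (Function.update x j t) = deriv (fun s => f (Function.update x j s)) t := by
  simp [pd, Function.update_idem]

lemma hasDerivAt_line {d : ℕ} (j : Fin d) (f : (Fin d → ℝ) → ℝ)
    (hf : Differentiable ℝ f) (x : Fin d → ℝ) (t : ℝ) :
    HasDerivAt (fun s => f (Function.update x j s)) (pd j f (Function.update x j t)) t := by
  classical
  have hfun : (fun s : ℝ => f (Function.update x j s))
      = fun s => f (Function.update x j 0 + s • (Pi.single j 1 : Fin d → ℝ)) := by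
    funext s
    congr 1
    funext i
    by_cases h : i = j
    · subst h; simp
    · simp [Function.update_of_ne h, Pi.single_apply, h]
  have hg : DifferentiableAt ℝ (fun s : ℝ => f (Function.update x j s)) t := by
    rw [hfun]
    have h1 : DifferentiableAt ℝ
        (fun s : ℝ => Function.update x j 0 + s • (Pi.single j 1 : Fin d → ℝ)) t := by
      apply DifferentiableAt.const_add
      exact (differentiable_id.smul_const (Pi.single j 1 : Fin d → ℝ)) t
    exact DifferentiableAt.comp t (hf _) h1
  rw [pd_update]
  exact hg.hasDerivAt

theorem stmt14 {d : ℕ} (j : Fin d) (p w : (Fin d → ℝ) → ℝ)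
    (hp : ContDiff ℝ 2 p) (hppos : ∀ x, 0 < p x) (hpdens : ∫ x, p x = 1)
    (hw : ContDiff ℝ 1 w)
    (hbound : ∀ x : Fin d → ℝ,
      Tendsto (fun t => w (Function.update x j t) * p (Function.update x j t))
        (cocompact ℝ) (nhds 0))
    (vj : (Fin d → ℝ) → ℝ)
    (hvj : ∀ x, vj x = pd j (fun z => Real.log (p z)) x
        - ∑ i, pd i (fun y => pd j (fun z => Real.log (p z)) y) x * x i)
    (hint1 : Integrable (fun x => (w x - vj x) ^ 2 * p x))
    (hint2 : Integrable (fun x => (vj x) ^ 2 * p x))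
    (hint3 : Integrable (fun x => (w x) ^ 2 * p x))
    (hint4 : Integrable (fun x => pd j w x * p x))
    (hint5 : Integrable (fun x =>
      w x * (∑ i, pd i (fun y => pd j (fun z => Real.log (p z)) y) x * x i) * p x))
    (hint6 : Integrable (fun x => w x * pd j (fun z => Real.log (p z)) x * p x)) :
    (∫ x, (w x - vj x) ^ 2 * p x) - (∫ x, (vj x) ^ 2 * p x)
      = ∫ x, ((w x) ^ 2 + 2 * pd j w x
          + 2 * w x * (∑ i, pd i (fun y => pd j (fun z => Real.log (p z)) y) x * x i)) * p x := by
  classical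
  have hpd : Differentiable ℝ p := hp.differentiable (by norm_num)
  have hwd : Differentiable ℝ w := hw.differentiable (by norm_num)
  -- log derivative identity
  have hlog : ∀ x, pd j (fun z => Real.log (p z)) x = pd j p x / p x := by
    intro x
    have h2 := hasDerivAt_line j p hpd x (x j)
    simp only [Function.update_eq_self] at h2
    have h3 := h2.log (by rw [Function.update_eq_self]; exact (hppos x).ne')
    have := h3.deriv
    simpa [pd, Function.update_eq_self] using this
  have hwpd : (fun x => w x * pd j (fun z => Real.log (p z)) x * p x)
      = fun x => w x * pd j p x := by
    funext x
    rw [hlog x, mul_assoc, div_mul_cancel₀ _ (hppos x).ne']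
  -- the total derivative along coordinate j of w*p
  set D : (Fin d → ℝ) → ℝ := fun x => pd j w x * p x + w x * pd j p x with hD
  have hDint : Integrable D := by
    have h6 : Integrable (fun x => w x * pd j p x) := hwpd ▸ hint6
    exact hint4.add h6
  have hDeq : ∀ (x : Fin d → ℝ) (t : ℝ),
      HasDerivAt (fun s => w (Function.update x j s) * p (Function.update x j s))
        (D (Function.update x j t)) t := by
    intro x t
    have h1 := hasDerivAt_line j w hwd x t
    have h2 := hasDerivAt_line j p hpd x t
    have := h1.mul h2
    exact this
  -- the key integration by parts: ∫ D = 0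
  have key0 : ∫ x, D x = 0 := by
    obtain ⟨n, rfl⟩ := Nat.exists_eq_succ_of_ne_zero (Nat.pos_iff_ne_zero.mp j.pos)
    set e := MeasurableEquiv.piFinSuccAbove (fun _ : Fin (n + 1) => ℝ) j with he
    have mp := volume_preserving_piFinSuccAbove (fun _ : Fin (n + 1) => ℝ) j
    have mps : MeasurePreserving (⇑e.symm) := MeasurePreserving.symm e mp
    have hcomp : Integrable (fun y : ℝ × (Fin n → ℝ) => D (e.symm y)) :=
      (mps.integrable_comp_emb e.symm.measurableEmbedding).2 hDint
    have h1 : ∫ x, D x = ∫ y : ℝ × (Fin n → ℝ), D (e.symm y) :=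
      (mps.integral_comp e.symm.measurableEmbedding D).symm
    rw [h1, Measure.volume_eq_prod, integral_prod_symm _ hcomp]
    have hz : ∀ᵐ z : Fin n → ℝ, Integrable (fun t : ℝ => D (e.symm (t, z))) :=
      hcomp.prod_left_ae
    rw [← integral_zero (Fin n → ℝ) ℝ]
    apply integral_congr_ae
    filter_upwards [hz] with z hz
    have hxe : ∀ t : ℝ, e.symm (t, z) = Function.update (j.insertNth 0 z) j t := by
      intro t
      rw [Fin.update_insertNth]
      simp [he, MeasurableEquiv.piFinSuccAbove_symm_apply, Fin.insertNthEquiv]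
    set x : Fin (n + 1) → ℝ := j.insertNth 0 z with hx
    have hz' : Integrable (fun t : ℝ => D (Function.update x j t)) := by
      simpa [hxe] using hz
    have hbot : Tendsto (fun t => w (Function.update x j t) * p (Function.update x j t))
        atBot (nhds 0) := by
      refine (hbound x).mono_left ?_
      rw [cocompact_eq_atBot_atTop]
      exact le_sup_left
    have htop : Tendsto (fun t => w (Function.update x j t) * p (Function.update x j t))
        atTop (nhds 0) := by
      refine (hbound x).mono_left ?_
      rw [cocompact_eq_atBot_atTop]
      exact le_sup_right
    have := integral_of_hasDerivAt_of_tendsto (hDeq x) hz' hbot htop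
    simp only [sub_zero] at this
    simpa [hxe] using this
  -- recombine
  have key : (∫ x, w x * pd j (fun z => Real.log (p z)) x * p x)
      + (∫ x, pd j w x * p x) = 0 := by
    rw [← integral_add hint6 hint4]
    rw [← key0]
    apply integral_congr_ae
    filter_upwards with x
    have : w x * pd j (fun z => Real.log (p z)) x * p x = w x * pd j p x := by
      rw [hlog x, mul_assoc, div_mul_cancel₀ _ (hppos x).ne']
    rw [this]
    simp [hD]
    ring
  -- expand LHS
  have e1 : (∫ x, (w x - vj x) ^ 2 * p x) - (∫ x, (vj x) ^ 2 * p x)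
      = ∫ x, ((w x) ^ 2 * p x
          - 2 * (w x * pd j (fun z => Real.log (p z)) x * p x)
          + 2 * (w x * (∑ i, pd i (fun y => pd j (fun z => Real.log (p z)) y) x * x i) * p x)) := by
    rw [← integral_sub hint1 hint2]
    apply integral_congr_ae
    filter_upwards with x
    rw [hvj x]
    ring
  have e2 : ∫ x, ((w x) ^ 2 + 2 * pd j w x
          + 2 * w x * (∑ i, pd i (fun y => pd j (fun z => Real.log (p z)) y) x * x i)) * p x
      = ∫ x, ((w x) ^ 2 * p x + 2 * (pd j w x * p x)
          + 2 * (w x * (∑ i, pd i (fun y => pd j (fun z => Real.log (p z)) y) x * x i) * p x)) := by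
    apply integral_congr_ae
    filter_upwards with x
    ring
  rw [e1, e2]
  have hL : Integrable (fun x => (w x) ^ 2 * p x
      - 2 * (w x * pd j (fun z => Real.log (p z)) x * p x)
      + 2 * (w x * (∑ i, pd i (fun y => pd j (fun z => Real.log (p z)) y) x * x i) * p x)) :=
    (hint3.sub (hint6.const_mul 2)).add (hint5.const_mul 2)
  have hR : Integrable (fun x => (w x) ^ 2 * p x + 2 * (pd j w x * p x)
      + 2 * (w x * (∑ i, pd i (fun y => pd j (fun z => Real.log (p z)) y) x * x i) * p x)) :=
    (hint3.add (hint4.const_mul 2)).add (hint5.const_mul 2)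
  have e3 : (∫ x, ((w x) ^ 2 * p x + 2 * (pd j w x * p x)
          + 2 * (w x * (∑ i, pd i (fun y => pd j (fun z => Real.log (p z)) y) x * x i) * p x)))
        - (∫ x, ((w x) ^ 2 * p x
          - 2 * (w x * pd j (fun z => Real.log (p z)) x * p x)
          + 2 * (w x * (∑ i, pd i (fun y => pd j (fun z => Real.log (p z)) y) x * x i) * p x)))
      = ∫ x, (2 * (pd j w x * p x)
          + 2 * (w x * pd j (fun z => Real.log (p z)) x * p x)) := by
    rw [← integral_sub hR hL]
    apply integral_congr_ae
    filter_upwards with x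
    ring
  have e4 : (∫ x, (2 * (pd j w x * p x)
          + 2 * (w x * pd j (fun z => Real.log (p z)) x * p x)))
      = 2 * (∫ x, pd j w x * p x)
        + 2 * (∫ x, w x * pd j (fun z => Real.log (p z)) x * p x) := by
    rw [integral_add (hint4.const_mul 2) (hint6.const_mul 2), integral_const_mul 2 _,
      integral_const_mul 2 _]
  linarith [e3, e4, key]
end

section
/- Let Γ̂, Γ* ∈ ℝ^{d×d} be symmetric positive semidefinite with ‖Γ̂ − Γ*‖_op ≤ ε, and suppose Γ* has eigenvalues λ₁ ≥ ... ≥ λ_m > λ_{m+1} ≥ ... ≥ λ_d with spectral gap δ = λ_m − λ_{m+1} > 0 and ε < δ/2. Then the orthogonal projections P̂ and P* onto the spans of the top-m eigenvectors of Γ̂ and Γ* respectively satisfy ‖P̂ − P*‖_op ≤ 2ε/δ (a Davis–Kahan type bound), so the estimated principal subspace of Γ̂ converges to that of Γ* at the rate of ‖Γ̂ − Γ*‖_op. -/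
open scoped Matrix
open scoped RealInnerProductSpace

section DKAux

variable {E : Type*} [NormedAddCommGroup E] [InnerProductSpace ℝ E] [FiniteDimensional ℝ E]

/-- Norm bound for symmetric operators with bounded quadratic form. -/
lemma dk_sa_norm_le (T : E →L[ℝ] E) (hsa : ∀ x y : E, ⟪T x, y⟫ = ⟪x, T y⟫)
    {c : ℝ} (hc : 0 ≤ c) (hq : ∀ x : E, |⟪T x, x⟫| ≤ c * ‖x‖ ^ 2) :
    ‖T‖ ≤ c := by
  refine T.opNorm_le_bound hc (fun x => ?_)
  rcases eq_or_ne (T x) 0 with h0 | h0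
  · rw [h0, norm_zero]; positivity
  have hx : x ≠ 0 := by rintro rfl; simp at h0
  have hxn : (0:ℝ) < ‖x‖ := norm_pos_iff.mpr hx
  have hTxn : (0:ℝ) < ‖T x‖ := norm_pos_iff.mpr h0
  set y := (‖x‖ / ‖T x‖) • T x with hy_def
  have hy : ‖y‖ = ‖x‖ := by
    rw [hy_def, norm_smul, Real.norm_eq_abs, abs_div, abs_of_nonneg (norm_nonneg _),
      abs_of_nonneg (norm_nonneg _), div_mul_cancel₀]
    exact ne_of_gt hTxn
  have hxy : ⟪T x, y⟫ = ‖x‖ * ‖T x‖ := by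
    rw [hy_def, real_inner_smul_right, real_inner_self_eq_norm_mul_norm]
    field_simp
  have expand : ⟪T (x + y), x + y⟫ - ⟪T (x - y), x - y⟫ = 4 * ⟪T x, y⟫ := by
    have h1 := hsa y x
    have h2 := real_inner_comm (T y) x
    simp only [map_add, map_sub, inner_add_left, inner_add_right, inner_sub_left,
      inner_sub_right]
    linarith [real_inner_comm (T x) y]
  have par : ‖x + y‖ ^ 2 + ‖x - y‖ ^ 2 = 2 * (‖x‖ ^ 2 + ‖y‖ ^ 2) := by
    have := parallelogram_law_with_norm ℝ x y
    nlinarith [this]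
  have h1 := hq (x + y)
  have h2 := hq (x - y)
  have h3 : 4 * (‖x‖ * ‖T x‖) ≤ |⟪T (x + y), x + y⟫| + |⟪T (x - y), x - y⟫| := by
    rw [← hxy, ← expand]
    have a1 := le_abs_self (⟪T (x + y), x + y⟫)
    have a2 := neg_abs_le (⟪T (x - y), x - y⟫)
    linarith
  have h4 : ‖x + y‖ ^ 2 + ‖x - y‖ ^ 2 = 4 * ‖x‖ ^ 2 := by rw [par, hy]; ring
  have h5 : c * (‖x + y‖ ^ 2 + ‖x - y‖ ^ 2) = c * (4 * ‖x‖ ^ 2) := by rw [h4]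
  have h6 : ‖x‖ * ‖T x‖ ≤ ‖x‖ * (c * ‖x‖) := by nlinarith
  exact le_of_mul_le_mul_left h6 hxn

/-- Elementary Sylvester-equation bound. -/
lemma dk_sylvester (A B X F : E →L[ℝ] E) {α β : ℝ} (hβ : 0 ≤ β) (hαβ : β < α)
    (hA : ∀ z : E, ‖A z‖ ≤ β * ‖z‖) (hB : ∀ x : E, α * ‖x‖ ^ 2 ≤ ⟪x, B x⟫)
    (hF : A * X - X * B = F) : ‖X‖ ≤ ‖F‖ / (α - β) := by
  have hα : (0:ℝ) < α := lt_of_le_of_lt hβ hαβ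
  have hinj : Function.Injective B := by
    intro u v huv
    have h : B (u - v) = 0 := by rw [map_sub, huv, sub_self]
    have := hB (u - v)
    rw [h, inner_zero_right] at this
    have : ‖u - v‖ ^ 2 ≤ 0 := by nlinarith
    have : ‖u - v‖ = 0 := by nlinarith [sq_nonneg ‖u - v‖, norm_nonneg (u - v)]
    rw [norm_eq_zero, sub_eq_zero] at this
    exact this
  have hsurj : Function.Surjective B := by
    have := (LinearMap.injective_iff_surjective (f := (B : E →ₗ[ℝ] E))).mp hinj
    exact this
  have hXB : X * B = A * X - F := by rw [← hF, sub_sub_cancel]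
  have hbound : ‖X‖ ≤ (β * ‖X‖ + ‖F‖) / α := by
    refine X.opNorm_le_bound (by positivity) (fun y => ?_)
    obtain ⟨x, rfl⟩ := hsurj y
    have hx_le : α * ‖x‖ ≤ ‖B x‖ := by
      rcases eq_or_ne x 0 with rfl | hx0
      · simp
      have h1 := hB x
      have h2 : ⟪x, B x⟫ ≤ ‖x‖ * ‖B x‖ := real_inner_le_norm x (B x)
      have hxp : (0:ℝ) < ‖x‖ := norm_pos_iff.mpr hx0
      nlinarith
    have h1 : X (B x) = A (X x) - F x := by
      have := congrArg (fun (T : E →L[ℝ] E) => T x) hXB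
      simpa using this
    rw [h1]
    have h2 : ‖A (X x) - F x‖ ≤ β * ‖X x‖ + ‖F x‖ := by
      calc ‖A (X x) - F x‖ ≤ ‖A (X x)‖ + ‖F x‖ := norm_sub_le _ _
        _ ≤ β * ‖X x‖ + ‖F x‖ := by gcongr; exact hA _
    have h3 : ‖X x‖ ≤ ‖X‖ * ‖x‖ := X.le_opNorm x
    have h4 : ‖F x‖ ≤ ‖F‖ * ‖x‖ := F.le_opNorm x
    have h5 : ‖x‖ ≤ ‖B x‖ / α := by
      rw [le_div_iff₀ hα]; linarith
    calc ‖A (X x) - F x‖ ≤ β * ‖X x‖ + ‖F x‖ := h2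
      _ ≤ (β * ‖X‖ + ‖F‖) * ‖x‖ := by nlinarith [norm_nonneg x, norm_nonneg (X x)]
      _ ≤ (β * ‖X‖ + ‖F‖) * (‖B x‖ / α) :=
          mul_le_mul_of_nonneg_left h5 (by positivity)
      _ = (β * ‖X‖ + ‖F‖) / α * ‖B x‖ := by ring
  rw [le_div_iff₀ (by linarith : (0:ℝ) < α - β)]
  rw [le_div_iff₀ hα] at hbound
  nlinarith [norm_nonneg F, norm_nonneg X]

end DKAux

section DKMatrix

variable {d : ℕ}

local notation "φ" => Matrix.toEuclideanCLM (𝕜 := ℝ) (n := Fin d)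

lemma dk_inner (M : Matrix (Fin d) (Fin d) ℝ) (x y : EuclideanSpace ℝ (Fin d)) :
    ⟪x, φ M y⟫ = (WithLp.equiv 2 _ x) ⬝ᵥ M.mulVec (WithLp.equiv 2 _ y) := by
  rw [EuclideanSpace.inner_eq_star_dotProduct]
  simp [Matrix.toLin'_apply]
  exact dotProduct_comm _ _

lemma dk_apply (M : Matrix (Fin d) (Fin d) ℝ) (x : EuclideanSpace ℝ (Fin d)) :
    WithLp.equiv 2 _ (φ M x) = M.mulVec (WithLp.equiv 2 _ x) := by
  simp [Matrix.toLin'_apply]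

lemma dk_normsq (x : EuclideanSpace ℝ (Fin d)) :
    ‖x‖ ^ 2 = (WithLp.equiv 2 _ x) ⬝ᵥ (WithLp.equiv 2 _ x) := by
  rw [← real_inner_self_eq_norm_sq, EuclideanSpace.inner_eq_star_dotProduct]
  simp

lemma dk_sa (M : Matrix (Fin d) (Fin d) ℝ) (h : M.IsSymm) : IsSelfAdjoint (φ M) := by
  have hs : star M = M := by
    rw [Matrix.star_eq_conjTranspose, Matrix.conjTranspose_eq_transpose_of_trivial]
    exact h
  unfold IsSelfAdjoint
  rw [← map_star (Matrix.toEuclideanCLM (𝕜 := ℝ) (n := Fin d)) M, hs]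

lemma dk_move (T : EuclideanSpace ℝ (Fin d) →L[ℝ] EuclideanSpace ℝ (Fin d))
    (h : IsSelfAdjoint T) (x y : EuclideanSpace ℝ (Fin d)) : ⟪T x, y⟫ = ⟪x, T y⟫ := by
  rw [← ContinuousLinearMap.adjoint_inner_left, h.adjoint_eq]

lemma dk_proj_apply_le (P : Matrix (Fin d) (Fin d) ℝ) (hs : P.IsSymm) (hi : P * P = P)
    (x : EuclideanSpace ℝ (Fin d)) : ‖φ P x‖ ≤ ‖x‖ := by
  have hsa := dk_sa P hs
  have h1 : ⟪φ P x, φ P x⟫ = ⟪x, φ P x⟫ := by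
    rw [dk_move _ hsa x (φ P x)]
    rw [← ContinuousLinearMap.mul_apply, ← map_mul, hi]
  have h2 : ‖φ P x‖ ^ 2 = ⟪x, φ P x⟫ := by
    rw [← h1, real_inner_self_eq_norm_sq]
  have h3 : ⟪x, φ P x⟫ ≤ ‖x‖ * ‖φ P x‖ := real_inner_le_norm _ _
  nlinarith [norm_nonneg (φ P x), norm_nonneg x]

lemma dk_proj_norm_le (P : Matrix (Fin d) (Fin d) ℝ) (hs : P.IsSymm) (hi : P * P = P) :
    ‖φ P‖ ≤ 1 := by
  refine ContinuousLinearMap.opNorm_le_bound _ zero_le_one (fun x => ?_)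
  rw [one_mul]
  exact dk_proj_apply_le P hs hi x

set_option maxHeartbeats 1000000 in
/-- One-sided Davis–Kahan bound via the Sylvester equation. -/
lemma dk_one_side (G1 G2 P1 P2 : Matrix (Fin d) (Fin d) ℝ)
    (hG1 : G1.PosSemidef)
    (hP1s : P1.IsSymm) (hP1i : P1 * P1 = P1) (hc1 : G1 * P1 = P1 * G1)
    (hP2s : P2.IsSymm) (hP2i : P2 * P2 = P2) (hc2 : G2 * P2 = P2 * G2)
    (β₀ α ε : ℝ) (hβα : max β₀ 0 < α)
    (htop : ∀ v : Fin d → ℝ, P2.mulVec v = v → α * (v ⬝ᵥ v) ≤ v ⬝ᵥ G2.mulVec v)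
    (hbot : ∀ v : Fin d → ℝ, P1.mulVec v = 0 → v ⬝ᵥ G1.mulVec v ≤ β₀ * (v ⬝ᵥ v))
    (hE : ‖φ (G1 - G2)‖ ≤ ε) :
    ‖φ ((1 - P1) * P2)‖ ≤ ε / (α - max β₀ 0) := by
  have hG1s : G1.IsSymm := by
    have := hG1.1
    rwa [Matrix.IsHermitian, Matrix.conjTranspose_eq_transpose_of_trivial] at this
  set β := max β₀ 0 with hβ_def
  have hβ0 : (0:ℝ) ≤ β := le_max_right _ _
  -- matrix-level Sylvester identity
  have e1 : ∀ X : Matrix (Fin d) (Fin d) ℝ, P2 * (P2 * X) = P2 * X := by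
    intro X; rw [← mul_assoc, hP2i]
  have e2 : ∀ X : Matrix (Fin d) (Fin d) ℝ, P1 * (P1 * X) = P1 * X := by
    intro X; rw [← mul_assoc, hP1i]
  have e3 : ∀ X : Matrix (Fin d) (Fin d) ℝ, G1 * (P1 * X) = P1 * (G1 * X) := by
    intro X; rw [← mul_assoc, hc1, mul_assoc]
  have e4 : ∀ X : Matrix (Fin d) (Fin d) ℝ, G2 * (P2 * X) = P2 * (G2 * X) := by
    intro X; rw [← mul_assoc, hc2, mul_assoc]
  have idm : ((1 - P1) * G1 * (1 - P1)) * ((1 - P1) * P2)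
      - ((1 - P1) * P2) * (P2 * G2 * P2 + α • (1 - P2))
      = (1 - P1) * (G1 - G2) * P2 := by
    simp only [mul_sub, sub_mul, mul_add, add_mul, mul_one, one_mul, mul_smul_comm,
      smul_mul_assoc, mul_assoc, e1, e2, e3, e4, hP2i, hP1i, hc1, hc2,
      smul_zero, mul_zero, zero_mul]
    abel_nf
    simp
  -- CLM versions
  set A := φ ((1 - P1) * G1 * (1 - P1)) with hA_def
  set B := φ (P2 * G2 * P2 + α • (1 - P2)) with hB_def
  set X := φ ((1 - P1) * P2) with hX_def
  set F := φ ((1 - P1) * (G1 - G2) * P2) with hF_def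
  have hQs : (1 - P1).IsSymm := by
    rw [Matrix.IsSymm, Matrix.transpose_sub, Matrix.transpose_one, hP1s]
  have hQi : (1 - P1) * (1 - P1) = 1 - P1 := by
    rw [mul_sub, sub_mul, sub_mul, hP1i]; noncomm_ring
  have hFid : A * X - X * B = F := by
    rw [hA_def, hB_def, hX_def, hF_def, ← map_mul, ← map_mul, ← map_sub, idm]
  -- norm of F
  have hε0 : (0:ℝ) ≤ ε := le_trans (norm_nonneg _) hE
  have hFnorm : ‖F‖ ≤ ε := by
    have hsplit : F = φ (1 - P1) * φ (G1 - G2) * φ P2 := by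
      rw [hF_def, ← map_mul, ← map_mul]
    rw [hsplit]
    have n1 := dk_proj_norm_le (1 - P1) hQs hQi
    have n2 := dk_proj_norm_le P2 hP2s hP2i
    calc ‖φ (1 - P1) * φ (G1 - G2) * φ P2‖
        ≤ ‖φ (1 - P1) * φ (G1 - G2)‖ * ‖φ P2‖ := norm_mul_le _ _
      _ ≤ ‖φ (1 - P1)‖ * ‖φ (G1 - G2)‖ * ‖φ P2‖ :=
          mul_le_mul_of_nonneg_right (norm_mul_le _ _) (norm_nonneg _)
      _ ≤ 1 * ε * 1 := by
          have hm : ‖φ (1 - P1)‖ * ‖φ (G1 - G2)‖ ≤ 1 * ε :=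
            mul_le_mul n1 hE (norm_nonneg _) zero_le_one
          exact mul_le_mul hm n2 (norm_nonneg _) (by linarith)
      _ = ε := by ring
  -- A bound
  have hAsa : IsSelfAdjoint A := by
    refine dk_sa _ ?_
    rw [Matrix.IsSymm, Matrix.transpose_mul, Matrix.transpose_mul, hQs, hG1s]
    rw [mul_assoc]
  have hAq : ∀ z : EuclideanSpace ℝ (Fin d), ‖A z‖ ≤ β * ‖z‖ := by
    have hnorm : ‖A‖ ≤ β := by
      refine dk_sa_norm_le A (dk_move A hAsa) hβ0 (fun x => ?_)
      have hq1 : ⟪x, A x⟫ = ⟪φ (1 - P1) x, φ G1 (φ (1 - P1) x)⟫ := by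
        rw [hA_def, map_mul, map_mul]
        rw [ContinuousLinearMap.mul_apply, ContinuousLinearMap.mul_apply]
        rw [← dk_move _ (dk_sa _ hQs) x (φ G1 (φ (1 - P1) x))]
      set z := φ (1 - P1) x with hz_def
      have hzero : P1.mulVec (WithLp.equiv 2 _ z) = 0 := by
        have h0 : φ P1 z = 0 := by
          rw [hz_def, ← ContinuousLinearMap.mul_apply, ← map_mul]
          have : P1 * (1 - P1) = 0 := by rw [mul_sub, mul_one, hP1i, sub_self]
          rw [this, map_zero, ContinuousLinearMap.zero_apply]
        have := congrArg (WithLp.equiv 2 (Fin d → ℝ)) h0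
        rw [dk_apply] at this
        simpa using this
      have hup : ⟪z, φ G1 z⟫ ≤ β₀ * ‖z‖ ^ 2 := by
        rw [dk_inner, dk_normsq]
        exact hbot _ hzero
      have hlo : 0 ≤ ⟪z, φ G1 z⟫ := by
        rw [dk_inner]
        have := hG1.dotProduct_mulVec_nonneg (WithLp.equiv 2 _ z)
        simpa using this
      have hzx : ‖z‖ ≤ ‖x‖ := dk_proj_apply_le (1 - P1) hQs hQi x
      have heq : ⟪A x, x⟫ = ⟪z, φ G1 z⟫ := by
        rw [dk_move A hAsa x x, hq1]
      rw [heq, abs_le]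
      have hsq : ‖z‖ * ‖z‖ ≤ ‖x‖ * ‖x‖ :=
        mul_le_mul hzx hzx (norm_nonneg z) (norm_nonneg x)
      constructor
      · have := mul_nonneg hβ0 (sq_nonneg ‖x‖)
        linarith
      · have h1 : β₀ * ‖z‖ ^ 2 ≤ β * ‖x‖ ^ 2 := by
          rcases le_or_gt β₀ 0 with hneg | hpos
          · have hz2 : β₀ * ‖z‖ ^ 2 ≤ 0 := mul_nonpos_of_nonpos_of_nonneg hneg (sq_nonneg _)
            have := mul_nonneg hβ0 (sq_nonneg ‖x‖)
            linarith
          · have hββ : β₀ ≤ β := le_max_left _ _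
            nlinarith [hsq, norm_nonneg z, norm_nonneg x]
        linarith
    intro z
    calc ‖A z‖ ≤ ‖A‖ * ‖z‖ := A.le_opNorm z
      _ ≤ β * ‖z‖ := mul_le_mul_of_nonneg_right hnorm (norm_nonneg z)
  -- B coercivity
  have hBq : ∀ x : EuclideanSpace ℝ (Fin d), α * ‖x‖ ^ 2 ≤ ⟪x, B x⟫ := by
    intro x
    have hsplit : B = φ (P2 * G2 * P2) + α • φ (1 - P2) := by
      rw [hB_def, map_add, map_smul]
    have hterm1 : ⟪x, φ (P2 * G2 * P2) x⟫ = ⟪φ P2 x, φ G2 (φ P2 x)⟫ := by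
      rw [map_mul, map_mul, ContinuousLinearMap.mul_apply, ContinuousLinearMap.mul_apply]
      rw [← dk_move _ (dk_sa _ hP2s) x (φ G2 (φ P2 x))]
    set y := φ P2 x with hy_def
    have hfix : P2.mulVec (WithLp.equiv 2 _ y) = WithLp.equiv 2 _ y := by
      have h0 : φ P2 y = y := by
        rw [hy_def, ← ContinuousLinearMap.mul_apply, ← map_mul, hP2i]
      have := congrArg (WithLp.equiv 2 (Fin d → ℝ)) h0
      rw [dk_apply] at this
      exact this
    have h1 : α * ‖y‖ ^ 2 ≤ ⟪y, φ G2 y⟫ := by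
      rw [dk_inner, dk_normsq]
      exact htop _ hfix
    have hyy : φ P2 y = y := by
      rw [hy_def, ← ContinuousLinearMap.mul_apply, ← map_mul, hP2i]
    have h2 : ⟪x, y⟫ = ‖y‖ ^ 2 := by
      calc ⟪x, y⟫ = ⟪x, φ P2 y⟫ := by rw [hyy]
        _ = ⟪φ P2 x, y⟫ := (dk_move _ (dk_sa _ hP2s) x y).symm
        _ = ⟪y, y⟫ := by rw [← hy_def]
        _ = ‖y‖ ^ 2 := real_inner_self_eq_norm_sq _
    have h3 : ⟪x, φ (1 - P2) x⟫ = ‖x‖ ^ 2 - ‖y‖ ^ 2 := by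
      have : φ (1 - P2) x = x - y := by
        rw [map_sub, map_one, ContinuousLinearMap.sub_apply, ContinuousLinearMap.one_apply,
          hy_def]
      rw [this, inner_sub_right, h2, real_inner_self_eq_norm_sq]
    have hBx : ⟪x, B x⟫ = ⟪x, φ (P2 * G2 * P2) x⟫ + α * ⟪x, φ (1 - P2) x⟫ := by
      rw [hsplit]
      simp [inner_add_right, inner_smul_right]
    rw [hBx, hterm1, h3]
    linarith [h1]
  -- apply Sylvester
  have := dk_sylvester A B X F hβ0 hβα hAq hBq hFid
  calc ‖X‖ ≤ ‖F‖ / (α - β) := this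
    _ ≤ ε / (α - β) := by
        have hpos : (0:ℝ) < α - β := by linarith
        gcongr

end DKMatrix

lemma dk_full_rank {d : ℕ} (P : Matrix (Fin d) (Fin d) ℝ) (hi : P * P = P)
    (hr : P.rank = d) : P = 1 := by
  have hre : Module.finrank ℝ (LinearMap.range P.mulVecLin) = d := hr
  have hrn := LinearMap.finrank_range_add_finrank_ker P.mulVecLin
  have hdom : Module.finrank ℝ (Fin d → ℝ) = d := by simp
  rw [hre, hdom] at hrn
  have hker0 : Module.finrank ℝ (LinearMap.ker P.mulVecLin) = 0 := by omega
  have hker : LinearMap.ker P.mulVecLin = ⊥ := Submodule.finrank_eq_zero.mp hker0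
  have hinj : Function.Injective P.mulVecLin := LinearMap.ker_eq_bot.mp hker
  have hfix : ∀ v : Fin d → ℝ, P.mulVec v = v := by
    intro v
    have h1 : P.mulVecLin (P.mulVec v) = P.mulVecLin v := by
      simp only [Matrix.mulVecLin_apply]
      rw [Matrix.mulVec_mulVec, hi]
    exact hinj h1
  have : Matrix.toLin' P = Matrix.toLin' (1 : Matrix (Fin d) (Fin d) ℝ) := by
    apply LinearMap.ext
    intro v
    rw [Matrix.toLin'_apply, Matrix.toLin'_apply, hfix, Matrix.one_mulVec]
  exact Matrix.toLin'.injective this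

lemma dk_ker_exists {d m : ℕ} (P : Matrix (Fin d) (Fin d) ℝ) (hr : P.rank = m) (hm : m < d) :
    ∃ v : Fin d → ℝ, v ≠ 0 ∧ P.mulVec v = 0 := by
  have hre : Module.finrank ℝ (LinearMap.range P.mulVecLin) = m := hr
  have hrn := LinearMap.finrank_range_add_finrank_ker P.mulVecLin
  have hdom : Module.finrank ℝ (Fin d → ℝ) = d := by simp
  rw [hre, hdom] at hrn
  have hker : LinearMap.ker P.mulVecLin ≠ ⊥ := by
    intro h
    rw [h, finrank_bot] at hrn
    omega
  obtain ⟨v, hvmem, hv0⟩ := (Submodule.ne_bot_iff _).mp hker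
  refine ⟨v, hv0, ?_⟩
  simpa [Matrix.mulVecLin_apply] using hvmem

set_option maxHeartbeats 1600000 in
set_option synthInstance.maxHeartbeats 400000 in
theorem stmt19 {d m : ℕ} (hmd : m ≤ d)
    (Γh Γs Ph Ps : Matrix (Fin d) (Fin d) ℝ)
    (hΓh : Γh.PosSemidef) (hΓs : Γs.PosSemidef)
    (lam lam' δ ε : ℝ) (hδ : δ = lam - lam') (hδpos : 0 < δ)
    (hε : ‖Matrix.toEuclideanCLM (𝕜 := ℝ) (Γh - Γs)‖ ≤ ε) (hεδ : ε < δ / 2)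
    -- `Ps` is the orthogonal projection onto the span of the top-`m` eigenvectors of `Γs`:
    (hPs_sym : Ps.IsSymm) (hPs_idem : Ps * Ps = Ps) (hPs_rank : Ps.rank = m)
    (hPs_comm : Γs * Ps = Ps * Γs)
    (hPs_top : ∀ v : Fin d → ℝ, Ps.mulVec v = v → lam * (v ⬝ᵥ v) ≤ v ⬝ᵥ Γs.mulVec v)
    (hPs_bot : ∀ v : Fin d → ℝ, Ps.mulVec v = 0 → v ⬝ᵥ Γs.mulVec v ≤ lam' * (v ⬝ᵥ v))
    -- `Ph` is the orthogonal projection onto the span of the top-`m` eigenvectors of `Γh`;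
    -- by Weyl's inequality its top-`m` eigenvalues are at least `lam - ε` and the rest
    -- are at most `lam' + ε`:
    (a b : ℝ) (ha : lam - ε ≤ a) (hb : b ≤ lam' + ε)
    (hPh_sym : Ph.IsSymm) (hPh_idem : Ph * Ph = Ph) (hPh_rank : Ph.rank = m)
    (hPh_comm : Γh * Ph = Ph * Γh)
    (hPh_top : ∀ v : Fin d → ℝ, Ph.mulVec v = v → a * (v ⬝ᵥ v) ≤ v ⬝ᵥ Γh.mulVec v)
    (hPh_bot : ∀ v : Fin d → ℝ, Ph.mulVec v = 0 → v ⬝ᵥ Γh.mulVec v ≤ b * (v ⬝ᵥ v)) :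
    ‖Matrix.toEuclideanCLM (𝕜 := ℝ) (Ph - Ps)‖ ≤ 2 * ε / δ := by
  have hε0 : (0:ℝ) ≤ ε := le_trans (norm_nonneg _) hε
  rcases eq_or_lt_of_le hmd with hmeq | hmlt
  · -- m = d : both projections are the identity
    have hPs1 : Ps = 1 := dk_full_rank Ps hPs_idem (by rw [hPs_rank, ← hmeq])
    have hPh1 : Ph = 1 := dk_full_rank Ph hPh_idem (by rw [hPh_rank, ← hmeq])
    rw [hPh1, hPs1, sub_self, map_zero, norm_zero]
    positivity
  · -- main case
    have hδε : (0:ℝ) < δ - ε := by linarith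
    obtain ⟨v, hv0, hvker⟩ := dk_ker_exists Ps hPs_rank hmlt
    have hvv : (0:ℝ) < v ⬝ᵥ v := by
      have hnn : (0:ℝ) ≤ v ⬝ᵥ v := Finset.sum_nonneg (fun i _ => mul_self_nonneg (v i))
      rcases lt_or_eq_of_le hnn with h | h
      · exact h
      · exact absurd ((dotProduct_self_eq_zero).mp h.symm) hv0
    have hlam' : (0:ℝ) ≤ lam' := by
      have h1 := hPs_bot v hvker
      have h2 : 0 ≤ v ⬝ᵥ Γs.mulVec v := by simpa using hΓs.dotProduct_mulVec_nonneg v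
      nlinarith
    -- first one-sided bound
    have hgap1 : δ - ε ≤ lam - max b 0 := by
      have h1 : max b 0 ≤ lam' + ε := max_le hb (by linarith)
      linarith
    have hβα1 : max b 0 < lam := by linarith
    have K1 := dk_one_side Γh Γs Ph Ps hΓh hPh_sym hPh_idem hPh_comm
      hPs_sym hPs_idem hPs_comm b lam ε hβα1 hPs_top hPh_bot hε
    -- second one-sided bound
    have hE2 : ‖Matrix.toEuclideanCLM (𝕜 := ℝ) (n := Fin d) (Γs - Γh)‖ ≤ ε := by
      have hneg : Γs - Γh = -(Γh - Γs) := (neg_sub _ _).symm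
      rw [hneg, map_neg, norm_neg]
      exact hε
    have hgap2 : δ - ε ≤ a - max lam' 0 := by
      rw [max_eq_left hlam']
      linarith
    have hβα2 : max lam' 0 < a := by linarith
    have K2 := dk_one_side Γs Γh Ps Ph hΓs hPs_sym hPs_idem hPs_comm
      hPh_sym hPh_idem hPh_comm lam' a ε hβα2 hPh_top hPs_bot hE2
    -- uniform constant
    set K := ε / (δ - ε) with hK_def
    have hK0 : (0:ℝ) ≤ K := div_nonneg hε0 (le_of_lt hδε)
    have hK1 : ‖Matrix.toEuclideanCLM (𝕜 := ℝ) (n := Fin d) ((1 - Ph) * Ps)‖ ≤ K := by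
      refine le_trans K1 ?_
      rw [hK_def]
      exact div_le_div_of_nonneg_left hε0 hδε hgap1
    have hK2 : ‖Matrix.toEuclideanCLM (𝕜 := ℝ) (n := Fin d) ((1 - Ps) * Ph)‖ ≤ K := by
      refine le_trans K2 ?_
      rw [hK_def]
      exact div_le_div_of_nonneg_left hε0 hδε hgap2
    have hKt : ‖Matrix.toEuclideanCLM (𝕜 := ℝ) (n := Fin d) (Ph * (1 - Ps))‖ ≤ K := by
      have hstar : Matrix.toEuclideanCLM (𝕜 := ℝ) (n := Fin d) (Ph * (1 - Ps))
          = star (Matrix.toEuclideanCLM (𝕜 := ℝ) (n := Fin d) ((1 - Ps) * Ph)) := by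
        rw [← map_star]
        congr 1
        rw [Matrix.star_eq_conjTranspose, Matrix.conjTranspose_eq_transpose_of_trivial,
          Matrix.transpose_mul, Matrix.transpose_sub, Matrix.transpose_one, hPs_sym, hPh_sym]
      rw [hstar, ContinuousLinearMap.star_eq_adjoint, LinearIsometryEquiv.norm_map]
      exact hK2
    -- pointwise bound
    have hRi : (1 - Ps) * (1 - Ps) = 1 - Ps := by
      rw [mul_sub, sub_mul, sub_mul, hPs_idem]; noncomm_ring
    have hmain : ‖Matrix.toEuclideanCLM (𝕜 := ℝ) (n := Fin d) (Ph - Ps)‖ ≤ K := by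
      refine ContinuousLinearMap.opNorm_le_bound _ hK0 (fun x => ?_)
      have hD : Ph - Ps = Ph * (1 - Ps) - (1 - Ph) * Ps := by noncomm_ring
      set u := Matrix.toEuclideanCLM (𝕜 := ℝ) (n := Fin d) (Ph * (1 - Ps)) x with hu_def
      set w := Matrix.toEuclideanCLM (𝕜 := ℝ) (n := Fin d) ((1 - Ph) * Ps) x with hw_def
      have hDx : Matrix.toEuclideanCLM (𝕜 := ℝ) (n := Fin d) (Ph - Ps) x = u - w := by
        rw [hD, map_sub, ContinuousLinearMap.sub_apply]
      have horth : ⟪u, w⟫ = 0 := by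
        have hu2 : u = Matrix.toEuclideanCLM (𝕜 := ℝ) (n := Fin d) Ph
            (Matrix.toEuclideanCLM (𝕜 := ℝ) (n := Fin d) (1 - Ps) x) := by
          rw [hu_def, map_mul, ContinuousLinearMap.mul_apply]
        have hw2 : w = Matrix.toEuclideanCLM (𝕜 := ℝ) (n := Fin d) (1 - Ph)
            (Matrix.toEuclideanCLM (𝕜 := ℝ) (n := Fin d) Ps x) := by
          rw [hw_def, map_mul, ContinuousLinearMap.mul_apply]
        rw [hu2, hw2, dk_move _ (dk_sa Ph hPh_sym)]
        have hz : Matrix.toEuclideanCLM (𝕜 := ℝ) (n := Fin d) Ph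
            (Matrix.toEuclideanCLM (𝕜 := ℝ) (n := Fin d) (1 - Ph)
              (Matrix.toEuclideanCLM (𝕜 := ℝ) (n := Fin d) Ps x)) = 0 := by
          rw [← ContinuousLinearMap.mul_apply, ← map_mul]
          have h0 : Ph * (1 - Ph) = 0 := by
            rw [mul_sub, mul_one, hPh_idem, sub_self]
          rw [h0, map_zero, ContinuousLinearMap.zero_apply]
        rw [hz, inner_zero_right]
      have hnormsq : ‖Matrix.toEuclideanCLM (𝕜 := ℝ) (n := Fin d) (Ph - Ps) x‖ ^ 2
          = ‖u‖ ^ 2 + ‖w‖ ^ 2 := by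
        rw [hDx, norm_sub_sq_real, horth]; ring
      have hu_le : ‖u‖ ≤ K * ‖Matrix.toEuclideanCLM (𝕜 := ℝ) (n := Fin d) (1 - Ps) x‖ := by
        have hu3 : u = Matrix.toEuclideanCLM (𝕜 := ℝ) (n := Fin d) (Ph * (1 - Ps))
            (Matrix.toEuclideanCLM (𝕜 := ℝ) (n := Fin d) (1 - Ps) x) := by
          rw [hu_def, ← ContinuousLinearMap.mul_apply, ← map_mul, mul_assoc, hRi]
        rw [hu3]
        exact le_trans (ContinuousLinearMap.le_opNorm _ _)
          (mul_le_mul_of_nonneg_right hKt (norm_nonneg _))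
      have hw_le : ‖w‖ ≤ K * ‖Matrix.toEuclideanCLM (𝕜 := ℝ) (n := Fin d) Ps x‖ := by
        have hw3 : w = Matrix.toEuclideanCLM (𝕜 := ℝ) (n := Fin d) ((1 - Ph) * Ps)
            (Matrix.toEuclideanCLM (𝕜 := ℝ) (n := Fin d) Ps x) := by
          rw [hw_def, ← ContinuousLinearMap.mul_apply, ← map_mul, mul_assoc, hPs_idem]
        rw [hw3]
        exact le_trans (ContinuousLinearMap.le_opNorm _ _)
          (mul_le_mul_of_nonneg_right hK1 (norm_nonneg _))
      have hpyth : ‖Matrix.toEuclideanCLM (𝕜 := ℝ) (n := Fin d) (1 - Ps) x‖ ^ 2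
          + ‖Matrix.toEuclideanCLM (𝕜 := ℝ) (n := Fin d) Ps x‖ ^ 2 = ‖x‖ ^ 2 := by
        set s := Matrix.toEuclideanCLM (𝕜 := ℝ) (n := Fin d) Ps x with hs_def
        have hr2 : Matrix.toEuclideanCLM (𝕜 := ℝ) (n := Fin d) (1 - Ps) x = x - s := by
          rw [map_sub, map_one, ContinuousLinearMap.sub_apply, ContinuousLinearMap.one_apply,
            hs_def]
        have hss : Matrix.toEuclideanCLM (𝕜 := ℝ) (n := Fin d) Ps s = s := by
          rw [hs_def, ← ContinuousLinearMap.mul_apply, ← map_mul, hPs_idem]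
        have hxs : ⟪x, s⟫ = ‖s‖ ^ 2 := by
          calc ⟪x, s⟫ = ⟪x, Matrix.toEuclideanCLM (𝕜 := ℝ) (n := Fin d) Ps s⟫ := by rw [hss]
            _ = ⟪Matrix.toEuclideanCLM (𝕜 := ℝ) (n := Fin d) Ps x, s⟫ :=
                (dk_move _ (dk_sa Ps hPs_sym) x s).symm
            _ = ⟪s, s⟫ := by rw [← hs_def]
            _ = ‖s‖ ^ 2 := real_inner_self_eq_norm_sq _
        rw [hr2, norm_sub_sq_real, hxs]
        ring
      have hsq : ‖Matrix.toEuclideanCLM (𝕜 := ℝ) (n := Fin d) (Ph - Ps) x‖ ^ 2 ≤ K ^ 2 * ‖x‖ ^ 2 := by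
        rw [hnormsq, ← hpyth]
        have b1 : ‖u‖ ^ 2 ≤ K ^ 2 * ‖Matrix.toEuclideanCLM (𝕜 := ℝ) (n := Fin d) (1 - Ps) x‖ ^ 2 := by
          nlinarith [norm_nonneg u, norm_nonneg (Matrix.toEuclideanCLM (𝕜 := ℝ) (n := Fin d) (1 - Ps) x)]
        have b2 : ‖w‖ ^ 2 ≤ K ^ 2 * ‖Matrix.toEuclideanCLM (𝕜 := ℝ) (n := Fin d) Ps x‖ ^ 2 := by
          nlinarith [norm_nonneg w, norm_nonneg (Matrix.toEuclideanCLM (𝕜 := ℝ) (n := Fin d) Ps x)]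
        linarith [b1, b2]
      nlinarith [norm_nonneg (Matrix.toEuclideanCLM (𝕜 := ℝ) (n := Fin d) (Ph - Ps) x), norm_nonneg x,
        mul_nonneg hK0 (norm_nonneg x), hsq]
    have hKfin : K ≤ 2 * ε / δ := by
      rw [hK_def, div_le_div_iff₀ hδε hδpos]
      nlinarith
    linarith
end
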